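/- arXiv:1603.00454 — 4 statements merged into one kernel-verified Lean document; each statement's English description precedes it below -/
import Mathlib

section
/- A subset A ⊆ Z^n is definable with parameters in (Z,+,0) if and only if A is a finite Boolean combination of cosets of subgroups of Z^n. -/
open FirstOrder

/-- Function symbols of the language of `(ℤ,+,0)`: one constant (`0`) and one binary function
(`+`). -/
def grpFunc : ℕ → Type
  | 0 => Unit
  | 2 => Unit
  | _ => Empty

/-- The language of `(ℤ,+,0)`. -/
def LangGrp : FirstOrder.Language := ⟨grpFunc, fun _ => Empty⟩

noncomputable instance : LangGrp.Structure ℤ where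
  funMap {n} f x :=
    match n, f with
    | 0, _ => 0
    | 2, _ => x 0 + x 1
  RelMap {n} r _ := r.elim

/-- The language of `(ℤ,+,<,0)`. -/
def LangOrdGrp : FirstOrder.Language := LangGrp.sum FirstOrder.Language.order

noncomputable instance : FirstOrder.Language.order.Structure ℤ :=
  FirstOrder.Language.orderStructure ℤ

noncomputable instance : LangOrdGrp.Structure ℤ :=
  inferInstanceAs ((LangGrp.sum FirstOrder.Language.order).Structure ℤ)

/-- Presburger sets: subsets of `ℤⁿ` definable with parameters in `(ℤ,+,<,0)`. -/
def IsPresburger {n : ℕ} (s : Set ((Fin n) → ℤ)) : Prop :=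
  Set.Definable (Set.univ : Set ℤ) LangOrdGrp s

/-- Definability with parameters in `(ℤ,+,0)`. -/
def IsGroupDefinable {n : ℕ} (s : Set ((Fin n) → ℤ)) : Prop :=
  Set.Definable (Set.univ : Set ℤ) LangGrp s

/-- The language of `(ℤ,+,0,A)` with `A` an `n`-ary predicate. -/
def LangGrpRel (n : ℕ) : FirstOrder.Language :=
  ⟨grpFunc, fun m => if m = n then Unit else Empty⟩

/-- The structure `(ℤ,+,0,A)`. -/
noncomputable def relStructure {n : ℕ} (A : Set (Fin n → ℤ)) : (LangGrpRel n).Structure ℤ where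
  funMap {m} f x :=
    match m, f with
    | 0, _ => 0
    | 2, _ => x 0 + x 1
  RelMap {m} _ x := if h : m = n then (fun i : Fin n => x (Fin.cast h.symm i)) ∈ A else False

/-- `A ⊆ ℤⁿ` defines the ordering if `ℕ` (the set of nonnegative integers) is definable with
parameters in the expansion `(ℤ,+,0,A)`. -/
def DefinesOrdering {n : ℕ} (A : Set (Fin n → ℤ)) : Prop :=
  letI := relStructure A
  Set.Definable (Set.univ : Set ℤ) (LangGrpRel n) {f : Fin 1 → ℤ | 0 ≤ f 0}

/-- A subset of `ℤ` is Presburger if the corresponding unary set is definable in `(ℤ,+,<,0)`. -/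
def IsPresburger1 (A : Set ℤ) : Prop := IsPresburger {f : Fin 1 → ℤ | f 0 ∈ A}

/-- A subset of `ℤ` is definable in `(ℤ,+,0)`. -/
def IsGroupDefinable1 (A : Set ℤ) : Prop := IsGroupDefinable {f : Fin 1 → ℤ | f 0 ∈ A}

/-- A subset of `ℤ` defines the ordering. -/
def DefinesOrdering1 (A : Set ℤ) : Prop := DefinesOrdering {f : Fin 1 → ℤ | f 0 ∈ A}

/-- Finite Boolean combinations of cosets of subgroups of `ℤⁿ`. -/
inductive BoolCombCosets {n : ℕ} : Set (Fin n → ℤ) → Prop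
  | coset (a : Fin n → ℤ) (H : AddSubgroup (Fin n → ℤ)) :
      BoolCombCosets ((a + ·) '' (H : Set (Fin n → ℤ)))
  | compl {s : Set (Fin n → ℤ)} : BoolCombCosets s → BoolCombCosets sᶜ
  | union {s t : Set (Fin n → ℤ)} : BoolCombCosets s → BoolCombCosets t → BoolCombCosets (s ∪ t)
namespace Stmt3Aux
open Set

abbrev Zn (n : ℕ) := Fin n → ℤ

variable {n : ℕ}

/-- The coset `a + H`. -/
def cst (a : Zn n) (H : AddSubgroup (Zn n)) : Set (Zn n) := (a + ·) '' (H : Set (Zn n))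

lemma mem_cst {a x : Zn n} {H : AddSubgroup (Zn n)} : x ∈ cst a H ↔ x - a ∈ H := by
  constructor
  · rintro ⟨h, hh, rfl⟩; simpa using hh
  · intro h; exact ⟨x - a, h, by ring⟩

def IsCoset (s : Set (Zn n)) : Prop := ∃ a H, s = cst a H

def CosetE (s : Set (Zn n)) : Prop := s = ∅ ∨ IsCoset s

lemma IsCoset.cosetE {s : Set (Zn n)} (h : IsCoset s) : CosetE s := Or.inr h

lemma isCoset_univ : IsCoset (univ : Set (Zn n)) := by
  refine ⟨0, ⊤, ?_⟩
  ext x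
  simp only [cst, mem_univ, true_iff]
  exact ⟨x, by simp⟩

lemma IsCoset.bc {s : Set (Zn n)} (h : IsCoset s) : BoolCombCosets s := by
  obtain ⟨a, H, rfl⟩ := h; exact BoolCombCosets.coset a H

lemma bc_univ : BoolCombCosets (univ : Set (Zn n)) := isCoset_univ.bc

lemma bc_empty : BoolCombCosets (∅ : Set (Zn n)) := by
  have := bc_univ.compl (n := n)
  simpa using this

lemma CosetE.bc {s : Set (Zn n)} (h : CosetE s) : BoolCombCosets s := by
  rcases h with rfl | h
  · exact bc_empty
  · exact h.bc

lemma _root_.BoolCombCosets.inter {s t : Set (Zn n)} (hs : BoolCombCosets s)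
    (ht : BoolCombCosets t) : BoolCombCosets (s ∩ t) := by
  have := (hs.compl.union ht.compl).compl
  simpa [Set.compl_union] using this

lemma _root_.BoolCombCosets.diff {s t : Set (Zn n)} (hs : BoolCombCosets s)
    (ht : BoolCombCosets t) : BoolCombCosets (s \ t) := hs.inter ht.compl

lemma iUnion_equiv {α ι ι' : Type*} (e : ι' ≃ ι) (f : ι → Set α) :
    ⋃ i, f i = ⋃ j, f (e j) := by
  ext x
  simp only [mem_iUnion]
  exact ⟨fun ⟨i, hi⟩ => ⟨e.symm i, by simpa using hi⟩, fun ⟨j, hj⟩ => ⟨e j, hj⟩⟩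

lemma iInter_equiv {α ι ι' : Type*} (e : ι' ≃ ι) (f : ι → Set α) :
    ⋂ i, f i = ⋂ j, f (e j) := by
  ext x
  simp only [mem_iInter]
  exact ⟨fun h j => h (e j), fun h i => by simpa using h (e.symm i)⟩

lemma iUnion_fin_succ {α : Type*} {k : ℕ} (f : Fin (k + 1) → Set α) :
    ⋃ i, f i = f 0 ∪ ⋃ i : Fin k, f i.succ := by
  ext x
  simp only [mem_iUnion, mem_union]
  exact ⟨fun ⟨i, hi⟩ => Fin.cases (fun h => Or.inl h) (fun j h => Or.inr ⟨j, h⟩) i hi,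
    fun h => h.elim (fun h => ⟨0, h⟩) fun ⟨j, hj⟩ => ⟨j.succ, hj⟩⟩

lemma iInter_fin_succ {α : Type*} {k : ℕ} (f : Fin (k + 1) → Set α) :
    ⋂ i, f i = f 0 ∩ ⋂ i : Fin k, f i.succ := by
  ext x
  simp only [mem_iInter, mem_inter_iff]
  exact ⟨fun h => ⟨h 0, fun j => h j.succ⟩, fun h i => Fin.cases h.1 (fun j => h.2 j) i⟩

lemma bc_iUnion_fin {k : ℕ} {f : Fin k → Set (Zn n)} (hf : ∀ i, BoolCombCosets (f i)) :
    BoolCombCosets (⋃ i, f i) := by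
  induction k with
  | zero => simpa using bc_empty
  | succ k ih =>
    rw [iUnion_fin_succ]
    exact (hf 0).union (ih fun i => hf i.succ)

lemma bc_iInter_fin {k : ℕ} {f : Fin k → Set (Zn n)} (hf : ∀ i, BoolCombCosets (f i)) :
    BoolCombCosets (⋂ i, f i) := by
  induction k with
  | zero => simpa using bc_univ
  | succ k ih =>
    rw [iInter_fin_succ]
    exact (hf 0).inter (ih fun i => hf i.succ)

lemma bc_iUnion {ι : Type} [Finite ι] {f : ι → Set (Zn n)} (hf : ∀ i, BoolCombCosets (f i)) :
    BoolCombCosets (⋃ i, f i) := by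
  have e := (@Fintype.equivFin ι (Fintype.ofFinite ι)).symm
  rw [iUnion_equiv e]
  exact bc_iUnion_fin fun i => hf _

lemma bc_iInter {ι : Type} [Finite ι] {f : ι → Set (Zn n)} (hf : ∀ i, BoolCombCosets (f i)) :
    BoolCombCosets (⋂ i, f i) := by
  have e := (@Fintype.equivFin ι (Fintype.ofFinite ι)).symm
  rw [iInter_equiv e]
  exact bc_iInter_fin fun i => hf _

/-- A coset-or-empty minus a finite union of coset-or-empties is a Boolean combination. -/
lemma cosetE_diff_bc {ι : Type} [Finite ι] {C : Set (Zn n)} {D : ι → Set (Zn n)}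
    (hC : CosetE C) (hD : ∀ i, CosetE (D i)) : BoolCombCosets (C \ ⋃ i, D i) :=
  hC.bc.diff (bc_iUnion fun i => (hD i).bc)

lemma cst_inter_cosetE (a b : Zn n) (H K : AddSubgroup (Zn n)) :
    CosetE (cst a H ∩ cst b K) := by
  rcases eq_empty_or_nonempty (cst a H ∩ cst b K) with h | ⟨x0, hx0⟩
  · exact Or.inl h
  · refine Or.inr ⟨x0, H ⊓ K, ?_⟩
    have hx0H : x0 - a ∈ H := mem_cst.1 hx0.1
    have hx0K : x0 - b ∈ K := mem_cst.1 hx0.2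
    ext x
    simp only [mem_inter_iff, mem_cst, AddSubgroup.mem_inf]
    constructor
    · rintro ⟨h1, h2⟩
      exact ⟨by simpa using H.sub_mem h1 hx0H, by simpa using K.sub_mem h2 hx0K⟩
    · rintro ⟨h1, h2⟩
      exact ⟨by simpa using H.add_mem h1 hx0H, by simpa using K.add_mem h2 hx0K⟩

lemma CosetE.inter {s t : Set (Zn n)} (hs : CosetE s) (ht : CosetE t) : CosetE (s ∩ t) := by
  rcases hs with rfl | ⟨a, H, rfl⟩
  · exact Or.inl (by simp)
  rcases ht with rfl | ⟨b, K, rfl⟩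
  · exact Or.inl (by simp)
  exact cst_inter_cosetE a b H K

section Part2
open Set
variable {n m : ℕ}

lemma cst_translate (b a : Zn n) (H : AddSubgroup (Zn n)) :
    (b + ·) '' cst a H = cst (b + a) H := by
  ext x
  simp only [cst, ← Set.image_comp]
  constructor
  · rintro ⟨h, hh, rfl⟩; exact ⟨h, hh, by dsimp; ring⟩
  · rintro ⟨h, hh, rfl⟩; exact ⟨h, hh, by dsimp; ring⟩

lemma image_add_compl (b : Zn n) (s : Set (Zn n)) :
    (b + ·) '' sᶜ = ((b + ·) '' s)ᶜ :=
  Set.image_compl_eq (Equiv.addLeft b).bijective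

lemma _root_.BoolCombCosets.translate {s : Set (Zn n)} (hs : BoolCombCosets s) (b : Zn n) :
    BoolCombCosets ((b + ·) '' s) := by
  induction hs with
  | coset a H => rw [show ((a + ·) '' (H : Set (Zn n))) = cst a H from rfl, cst_translate]
                 exact IsCoset.bc ⟨b + a, H, rfl⟩
  | compl h ih => rw [image_add_compl]; exact ih.compl
  | union h1 h2 ih1 ih2 => rw [Set.image_union]; exact ih1.union ih2

lemma cst_image_hom (π : Zn n →+ Zn m) (a : Zn n) (H : AddSubgroup (Zn n)) :
    π '' cst a H = cst (π a) (H.map π) := by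
  ext y
  simp only [cst, ← Set.image_comp]
  constructor
  · rintro ⟨h, hh, rfl⟩
    exact ⟨π h, AddSubgroup.mem_map_of_mem π hh, by simp [map_add]⟩
  · rintro ⟨h', hh', rfl⟩
    obtain ⟨h, hh, rfl⟩ := hh'
    exact ⟨h, hh, by simp [map_add]⟩

lemma IsCoset.image_hom {s : Set (Zn n)} (hs : IsCoset s) (π : Zn n →+ Zn m) :
    IsCoset (π '' s) := by
  obtain ⟨a, H, rfl⟩ := hs
  rw [cst_image_hom]
  exact ⟨_, _, rfl⟩

lemma CosetE.image_hom {s : Set (Zn n)} (hs : CosetE s) (π : Zn n →+ Zn m) :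
    CosetE (π '' s) := by
  rcases hs with rfl | hs
  · exact Or.inl (by simp)
  · exact (hs.image_hom π).cosetE

/-- Basic sets: a coset-or-empty minus a finite union of cosets. -/
def Basic (s : Set (Zn n)) : Prop :=
  ∃ (ι : Type) (_ : Finite ι) (C : Set (Zn n)) (D : ι → Set (Zn n)),
    CosetE C ∧ (∀ i, IsCoset (D i)) ∧ s = C \ ⋃ i, D i

/-- Normal form: finite unions of basic sets. -/
def NF (s : Set (Zn n)) : Prop :=
  ∃ (ι : Type) (_ : Finite ι) (B : ι → Set (Zn n)),
    (∀ i, Basic (B i)) ∧ s = ⋃ i, B i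

lemma Basic.nf {s : Set (Zn n)} (hs : Basic s) : NF s :=
  ⟨Unit, inferInstance, fun _ => s, fun _ => hs, (Set.iUnion_const s).symm⟩

lemma CosetE.basic {s : Set (Zn n)} (hs : CosetE s) : Basic s :=
  ⟨Empty, inferInstance, s, fun i => i.elim, hs, fun i => i.elim, by simp⟩

lemma Basic.bc {s : Set (Zn n)} (hs : Basic s) : BoolCombCosets s := by
  obtain ⟨ι, _, C, D, hC, hD, rfl⟩ := hs
  exact cosetE_diff_bc hC fun i => (hD i).cosetE

lemma NF.bc {s : Set (Zn n)} (hs : NF s) : BoolCombCosets s := by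
  obtain ⟨ι, _, B, hB, rfl⟩ := hs
  exact bc_iUnion fun i => (hB i).bc

lemma Basic.inter {s t : Set (Zn n)} (hs : Basic s) (ht : Basic t) : Basic (s ∩ t) := by
  obtain ⟨ι, _, C, D, hC, hD, rfl⟩ := hs
  obtain ⟨ι', _, C', D', hC', hD', rfl⟩ := ht
  refine ⟨ι ⊕ ι', inferInstance, C ∩ C', Sum.elim D D', hC.inter hC',
    fun i => by cases i with | inl i => exact hD i | inr i => exact hD' i, ?_⟩
  rw [Set.iUnion_sum]
  ext x
  simp only [Set.mem_inter_iff, Set.mem_diff, Set.mem_union, Sum.elim_inl, Sum.elim_inr]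
  tauto

lemma NF.inter {s t : Set (Zn n)} (hs : NF s) (ht : NF t) : NF (s ∩ t) := by
  obtain ⟨ι, _, B, hB, rfl⟩ := hs
  obtain ⟨ι', _, B', hB', rfl⟩ := ht
  refine ⟨ι × ι', inferInstance, fun p => B p.1 ∩ B' p.2,
    fun p => (hB p.1).inter (hB' p.2), ?_⟩
  ext x
  simp only [Set.mem_inter_iff, Set.mem_iUnion]
  constructor
  · rintro ⟨⟨i, hi⟩, ⟨j, hj⟩⟩; exact ⟨⟨i, j⟩, hi, hj⟩
  · rintro ⟨⟨i, j⟩, hi, hj⟩; exact ⟨⟨i, hi⟩, ⟨j, hj⟩⟩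

lemma NF.union {s t : Set (Zn n)} (hs : NF s) (ht : NF t) : NF (s ∪ t) := by
  obtain ⟨ι, _, B, hB, rfl⟩ := hs
  obtain ⟨ι', _, B', hB', rfl⟩ := ht
  refine ⟨ι ⊕ ι', inferInstance, Sum.elim B B',
    fun i => by cases i with | inl i => exact hB i | inr i => exact hB' i, ?_⟩
  rw [Set.iUnion_sum]
  simp

lemma nf_univ : NF (univ : Set (Zn n)) := isCoset_univ.cosetE.basic.nf

lemma Basic.compl_nf {s : Set (Zn n)} (hs : Basic s) : NF sᶜ := by
  obtain ⟨ι, _, C, D, hC, hD, rfl⟩ := hs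
  have hCc : Basic Cᶜ := by
    rcases hC with rfl | ⟨a, H, rfl⟩
    · rw [Set.compl_empty]; exact CosetE.basic isCoset_univ.cosetE
    · refine ⟨Unit, inferInstance, univ, fun _ => cst a H, isCoset_univ.cosetE,
        fun _ => ⟨a, H, rfl⟩, ?_⟩
      simp [Set.iUnion_const, Set.compl_eq_univ_diff]
  refine ⟨Unit ⊕ ι, inferInstance, Sum.elim (fun _ => Cᶜ) D,
    fun i => by cases i with | inl i => exact hCc | inr i => exact ((hD i).cosetE).basic, ?_⟩
  rw [Set.iUnion_sum]
  simp only [Set.iUnion_const, Sum.elim_inl, Sum.elim_inr]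
  rw [Set.diff_eq, Set.compl_inter, compl_compl]

lemma nf_iInter_fin {k : ℕ} {f : Fin k → Set (Zn n)} (hf : ∀ i, NF (f i)) :
    NF (⋂ i, f i) := by
  induction k with
  | zero => simpa using nf_univ
  | succ k ih =>
    rw [iInter_fin_succ]
    exact (hf 0).inter (ih fun i => hf i.succ)

lemma nf_iInter {ι : Type} [Finite ι] {f : ι → Set (Zn n)} (hf : ∀ i, NF (f i)) :
    NF (⋂ i, f i) := by
  have e := (@Fintype.equivFin ι (Fintype.ofFinite ι)).symm
  rw [iInter_equiv e]
  exact nf_iInter_fin fun i => hf _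

lemma NF.compl {s : Set (Zn n)} (hs : NF s) : NF sᶜ := by
  obtain ⟨ι, _, B, hB, rfl⟩ := hs
  rw [Set.compl_iUnion]
  exact nf_iInter fun i => (hB i).compl_nf

lemma _root_.BoolCombCosets.nf {s : Set (Zn n)} (hs : BoolCombCosets s) : NF s := by
  induction hs with
  | coset a H => exact Basic.nf (CosetE.basic (IsCoset.cosetE ⟨a, H, rfl⟩))
  | compl h ih => exact ih.compl
  | union h1 h2 ih1 ih2 => exact ih1.union ih2

end Part2
section Part3
open Set

/-- Projection dropping the last coordinate. -/
def proj (m : ℕ) : Zn (m + 1) →+ Zn m where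
  toFun f := f ∘ Fin.castSucc
  map_zero' := rfl
  map_add' _ _ := rfl

/-- The last coordinate. -/
def val {m : ℕ} (x : Zn (m + 1)) : ℤ := x (Fin.last m)

variable {m : ℕ}

lemma proj_apply (x : Zn (m + 1)) (j : Fin m) : proj m x j = x j.castSucc := rfl

lemma eq_of_proj_val {x y : Zn (m + 1)} (h1 : proj m x = proj m y) (h2 : val x = val y) :
    x = y := by
  funext i
  refine Fin.lastCases ?_ ?_ i
  · exact h2
  · intro j; exact congrFun h1 j

lemma val_smul (c : ℤ) (x : Zn (m + 1)) : val (c • x) = c * val x := by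
  simp [val, Pi.smul_apply, smul_eq_mul]

lemma val_neg (x : Zn (m + 1)) : val (-x) = -val x := by simp [val]

lemma val_add (x y : Zn (m + 1)) : val (x + y) = val x + val y := rfl

lemma val_ne_zero {x : Zn (m + 1)} (h1 : proj m x = 0) (h2 : x ≠ 0) : val x ≠ 0 := by
  intro hv
  exact h2 (eq_of_proj_val (by rw [h1, map_zero]) (by rw [hv]; rfl))

lemma image_diff_iUnion {X Y : Type*} {ι : Sort*} {f : X → Y} {U C : Set X} {D : ι → Set X}
    (hf : Set.InjOn f U) (hC : C ⊆ U) (hD : ∀ i, D i ⊆ U) :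
    f '' (C \ ⋃ i, D i) = f '' C \ ⋃ i, f '' D i := by
  ext y
  constructor
  · rintro ⟨x, ⟨hxC, hx⟩, rfl⟩
    refine ⟨⟨x, hxC, rfl⟩, fun hmem => ?_⟩
    rw [Set.mem_iUnion] at hmem
    obtain ⟨i, x', hx', hfx⟩ := hmem
    exact hx (Set.mem_iUnion.2 ⟨i, by rwa [hf (hD i hx') (hC hxC) hfx] at hx'⟩)
  · rintro ⟨⟨x, hxC, rfl⟩, hy⟩
    refine ⟨x, ⟨hxC, fun hx => hy ?_⟩, rfl⟩
    obtain ⟨i, hi⟩ := Set.mem_iUnion.1 hx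
    exact Set.mem_iUnion.2 ⟨i, ⟨x, hi, rfl⟩⟩

lemma coe_eq_cst_zero {n : ℕ} (H : AddSubgroup (Zn n)) : (H : Set (Zn n)) = cst 0 H := by
  ext x
  rw [mem_cst]
  simp

lemma exists_smul_eq_smul (w : Zn (m + 1)) (hw : proj m w = 0) {k : ℕ}
    (v : Fin k → Zn (m + 1)) (hv0 : ∀ i, proj m (v i) = 0) (hvne : ∀ i, val (v i) ≠ 0) :
    ∃ c : ℤ, c ≠ 0 ∧ ∀ i, ∃ d : ℤ, c • w = d • v i := by
  refine ⟨∏ i, val (v i), Finset.prod_ne_zero_iff.2 (fun i _ => hvne i), fun i => ?_⟩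
  refine ⟨val w * ∏ j ∈ Finset.univ.erase i, val (v j), ?_⟩
  apply eq_of_proj_val
  · rw [map_zsmul, map_zsmul, hw, hv0 i, smul_zero, smul_zero]
  · rw [val_smul, val_smul, ← Finset.mul_prod_erase _ _ (Finset.mem_univ i)]
    ring

/-- The subgroup of elements with last coordinate 0. -/
def P0 (m : ℕ) : AddSubgroup (Zn (m + 1)) :=
  AddMonoidHom.ker (Pi.evalAddMonoidHom (fun _ : Fin (m + 1) => ℤ) (Fin.last m))

lemma slice_eq_cst (t : ℤ) :
    {x : Zn (m + 1) | val x = t} = cst (fun j => if j = Fin.last m then t else 0) (P0 m) := by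
  ext x
  rw [Set.mem_setOf_eq, mem_cst]
  simp only [P0, AddMonoidHom.mem_ker, Pi.evalAddMonoidHom_apply, Pi.sub_apply, val,
    if_pos rfl, if_true, eq_self_iff_true]
  omega

lemma injOn_slice (t : ℤ) : Set.InjOn (proj m) {x : Zn (m + 1) | val x = t} :=
  fun x hx y hy hxy => eq_of_proj_val hxy (hx.trans hy.symm)

lemma cosetE_slice {s : Set (Zn (m + 1))} (hs : CosetE s) (t : ℤ) :
    CosetE (s ∩ {x | val x = t}) := by
  refine hs.inter ?_
  rw [slice_eq_cst]
  exact (IsCoset.cosetE ⟨_, _, rfl⟩)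

/-- Projection of a slice of a basic set is a Boolean combination. -/
lemma slice_bc {k : ℕ} (H : AddSubgroup (Zn (m + 1))) (b : Fin k → Zn (m + 1))
    (Hs : Fin k → AddSubgroup (Zn (m + 1))) (t : ℤ) :
    BoolCombCosets (proj m ''
      ((((H : Set (Zn (m + 1)))) \ ⋃ i, cst (b i) (Hs i)) ∩ {x | val x = t})) := by
  have hdecomp : (((H : Set (Zn (m + 1))) \ ⋃ i, cst (b i) (Hs i)) ∩ {x | val x = t})
      = ((H : Set (Zn (m + 1))) ∩ {x | val x = t})
        \ ⋃ i, (cst (b i) (Hs i) ∩ {x | val x = t}) := by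
    ext x
    simp only [Set.mem_inter_iff, Set.mem_diff, Set.mem_iUnion, not_exists]
    tauto
  rw [hdecomp, image_diff_iUnion (injOn_slice t) Set.inter_subset_right
    (fun i => Set.inter_subset_right)]
  refine cosetE_diff_bc ?_ fun i => ?_
  · refine CosetE.image_hom ?_ (proj m)
    rw [coe_eq_cst_zero]
    exact cosetE_slice (IsCoset.cosetE ⟨_, _, rfl⟩) t
  · exact CosetE.image_hom (cosetE_slice (IsCoset.cosetE ⟨_, _, rfl⟩) t) (proj m)

/-- Core lemma, case where the group and each subgroup meet the kernel nontrivially. -/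
lemma core2 {k : ℕ} (H : AddSubgroup (Zn (m + 1))) (b : Fin k → Zn (m + 1))
    (Hs : Fin k → AddSubgroup (Zn (m + 1)))
    (w : Zn (m + 1)) (hwH : w ∈ H) (hwk : proj m w = 0) (hw0 : w ≠ 0)
    (hP : ∀ i, ∃ u, u ∈ Hs i ∧ proj m u = 0 ∧ u ≠ 0) :
    BoolCombCosets ((proj m) '' ((H : Set (Zn (m + 1))) \ ⋃ i, cst (b i) (Hs i))) := by
  classical
  choose u huH huk hu0 using hP
  obtain ⟨c, hc, hd⟩ := exists_smul_eq_smul w hwk u (fun i => huk i)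
    (fun i => val_ne_zero (huk i) (hu0 i))
  have hv1 : val (c • w) ≠ 0 := by
    rw [val_smul]; exact mul_ne_zero hc (val_ne_zero hwk hw0)
  set ℓ : Zn (m + 1) := if 0 < val (c • w) then c • w else -(c • w) with hℓdef
  have hmem : ∀ (G : AddSubgroup (Zn (m + 1))), c • w ∈ G → ℓ ∈ G := by
    intro G h
    rw [hℓdef]; split
    · exact h
    · exact G.neg_mem h
  have hℓH : ℓ ∈ H := hmem H (H.zsmul_mem hwH c)
  have hℓHs : ∀ i, ℓ ∈ Hs i := by
    intro i
    obtain ⟨d, hdi⟩ := hd i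
    exact hmem _ (hdi ▸ (Hs i).zsmul_mem (huH i) d)
  have hℓk : proj m ℓ = 0 := by
    rw [hℓdef]; split
    · rw [map_zsmul, hwk, smul_zero]
    · rw [map_neg, map_zsmul, hwk, smul_zero, neg_zero]
  have hvpos : 0 < val ℓ := by
    rw [hℓdef]; split
    · assumption
    · rw [val_neg]; omega
  set S : Set (Zn (m + 1)) := (H : Set (Zn (m + 1))) \ ⋃ i, cst (b i) (Hs i) with hSdef
  have hSinv : ∀ z ∈ S, ∀ s : ℤ, z + s • ℓ ∈ S := by
    rintro z ⟨hzH, hz⟩ s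
    refine ⟨H.add_mem hzH (H.zsmul_mem hℓH s), fun hmem' => ?_⟩
    obtain ⟨i, hi⟩ := Set.mem_iUnion.1 hmem'
    refine hz (Set.mem_iUnion.2 ⟨i, ?_⟩)
    rw [mem_cst] at hi ⊢
    have h2 := (Hs i).sub_mem hi ((Hs i).zsmul_mem (hℓHs i) s)
    have heq : z + s • ℓ - b i - s • ℓ = z - b i := by ring
    rwa [heq] at h2
  set M := (val ℓ).toNat with hMdef
  have hM : (M : ℤ) = val ℓ := Int.toNat_of_nonneg hvpos.le
  have key : proj m '' S = ⋃ t : Fin M, proj m '' (S ∩ {x | val x = ((t : ℕ) : ℤ)}) := by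
    apply Set.Subset.antisymm
    · rintro y ⟨z, hzS, rfl⟩
      set q := val z / val ℓ with hqdef
      have hz' := hSinv z hzS (-q)
      have hvz' : val (z + (-q) • ℓ) = val z % val ℓ := by
        have h1 := Int.mul_ediv_add_emod (val z) (val ℓ)
        rw [val_add, val_smul]
        rw [← hqdef] at h1
        linarith [h1]
      have h0r : 0 ≤ val z % val ℓ := Int.emod_nonneg _ (ne_of_gt hvpos)
      have hrM : val z % val ℓ < val ℓ := Int.emod_lt_of_pos _ hvpos
      refine Set.mem_iUnion.2 ⟨⟨(val z % val ℓ).toNat, by omega⟩, ⟨z + (-q) • ℓ, ⟨hz', ?_⟩, ?_⟩⟩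
      · simp only [Set.mem_setOf_eq, hvz']
        omega
      · rw [map_add, map_zsmul, hℓk, smul_zero, add_zero]
    · exact Set.iUnion_subset fun t => Set.image_mono Set.inter_subset_left
  rw [key]
  exact bc_iUnion_fin fun t => slice_bc H b Hs _

/-- Core lemma: projection of a basic set over a subgroup. -/
lemma core {k : ℕ} (H : AddSubgroup (Zn (m + 1))) (b : Fin k → Zn (m + 1))
    (Hs : Fin k → AddSubgroup (Zn (m + 1)))
    (hsub : ∀ i, cst (b i) (Hs i) ⊆ (H : Set (Zn (m + 1)))) :
    BoolCombCosets ((proj m) '' ((H : Set (Zn (m + 1))) \ ⋃ i, cst (b i) (Hs i))) := by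
  classical
  by_cases hK : ∃ w, w ∈ H ∧ proj m w = 0 ∧ w ≠ 0
  · obtain ⟨w, hwH, hwk, hw0⟩ := hK
    set P : Fin k → Prop := fun i => ∃ u, u ∈ Hs i ∧ proj m u = 0 ∧ u ≠ 0 with hPdef
    have step1 : (proj m) '' ((H : Set (Zn (m + 1))) \ ⋃ i, cst (b i) (Hs i))
        = (proj m) '' ((H : Set (Zn (m + 1))) \ ⋃ i : {i // P i}, cst (b i.1) (Hs i.1)) := by
      apply Set.Subset.antisymm
      · apply Set.image_mono
        apply Set.diff_subset_diff_right
        exact Set.iUnion_subset fun i => Set.subset_iUnion_of_subset i.1 le_rfl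
      · rintro y ⟨z, ⟨hzH, hz⟩, rfl⟩
        -- build a common nonzero kernel element of all Hs i with P i
        set u' : Fin k → Zn (m + 1) := fun i => if h : P i then h.choose else w with hu'def
        have hu'k : ∀ i, proj m (u' i) = 0 := by
          intro i
          rw [hu'def]; dsimp only; split
          · exact (Classical.choose_spec ‹P i›).2.1
          · exact hwk
        have hu'ne : ∀ i, val (u' i) ≠ 0 := by
          intro i
          rw [hu'def]; dsimp only; split
          · exact val_ne_zero (Classical.choose_spec ‹P i›).2.1
              (Classical.choose_spec ‹P i›).2.2
          · exact val_ne_zero hwk hw0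
        have hu'mem : ∀ i, P i → u' i ∈ Hs i := by
          intro i hi
          rw [hu'def]; dsimp only; rw [dif_pos hi]
          exact (Classical.choose_spec hi).1
        obtain ⟨c, hc, hd⟩ := exists_smul_eq_smul w hwk u' hu'k hu'ne
        set ℓ := c • w with hℓdef
        have hℓH : ℓ ∈ H := H.zsmul_mem hwH c
        have hℓk : proj m ℓ = 0 := by rw [hℓdef, map_zsmul, hwk, smul_zero]
        have hℓv : val ℓ ≠ 0 := by
          rw [hℓdef, val_smul]
          exact mul_ne_zero hc (val_ne_zero hwk hw0)
        have hℓHs : ∀ i, P i → ℓ ∈ Hs i := by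
          intro i hi
          obtain ⟨d, hdi⟩ := hd i
          have h5 : d • u' i ∈ Hs i := (Hs i).zsmul_mem (hu'mem i hi) d
          rwa [← hdi] at h5
        -- candidates z + s • ℓ avoid all cosets with P i
        have havoidP : ∀ (s : ℤ) (i : Fin k), P i → z + s • ℓ ∉ cst (b i) (Hs i) := by
          intro s i hi hmem'
          refine hz (Set.mem_iUnion.2 ⟨⟨i, hi⟩, ?_⟩)
          rw [mem_cst] at hmem' ⊢
          have h2 := (Hs i).sub_mem hmem' ((Hs i).zsmul_mem (hℓHs i hi) s)
          have heq : z + s • ℓ - b i - s • ℓ = z - b i := by ring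
          rwa [heq] at h2
        -- each coset without P i hits at most one candidate
        have huniq : ∀ (s s' : ℤ) (i : Fin k), ¬P i → s ≠ s' →
            z + s • ℓ ∈ cst (b i) (Hs i) → z + s' • ℓ ∈ cst (b i) (Hs i) → False := by
          intro s s' i hi hne h1 h2
          rw [mem_cst] at h1 h2
          have h3 := (Hs i).sub_mem h1 h2
          have heq : z + s • ℓ - b i - (z + s' • ℓ - b i) = (s - s') • ℓ := by
            rw [sub_smul]; ring
          rw [heq] at h3
          refine hi ⟨(s - s') • ℓ, h3, ?_, ?_⟩
          · rw [map_zsmul, hℓk, smul_zero]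
          · intro h4
            have := congrArg val h4
            rw [val_smul] at this
            simp only [val] at this
            have hss : s - s' ≠ 0 := sub_ne_zero.2 hne
            have : (s - s') * val ℓ = 0 := this
            rcases mul_eq_zero.1 this with h | h
            · exact hss h
            · exact hℓv h
        -- pigeonhole to find a good shift
        have hgood : ∃ s : ℤ, ∀ i, z + s • ℓ ∉ cst (b i) (Hs i) := by
          by_contra hcon
          push_neg at hcon
          choose g hg using fun s : Fin (k + 1) => hcon ((s : ℕ) : ℤ)
          obtain ⟨s, s', hss, hgs⟩ := Fintype.exists_ne_map_eq_of_card_lt g (by simp)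
          have hnP : ¬P (g s) := fun hp => havoidP _ _ hp (hg s)
          have hvalne : ((s : ℕ) : ℤ) ≠ ((s' : ℕ) : ℤ) := by
            intro h
            exact hss (Fin.ext (by exact_mod_cast h))
          exact huniq _ _ (g s) hnP hvalne (hg s) (hgs ▸ hg s')
        obtain ⟨s, hs⟩ := hgood
        refine ⟨z + s • ℓ, ⟨H.add_mem hzH (H.zsmul_mem hℓH s), fun hmem' => ?_⟩, ?_⟩
        · obtain ⟨i, hi⟩ := Set.mem_iUnion.1 hmem'
          exact hs i hi
        · rw [map_add, map_zsmul, hℓk, smul_zero, add_zero]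
    rw [step1]
    -- reindex the subtype by Fin
    have e := (@Fintype.equivFin {i // P i} (Fintype.ofFinite _)).symm
    rw [iUnion_equiv e]
    exact core2 H (fun j => b (e j).1) (fun j => Hs (e j).1) w hwH hwk hw0
      fun j => (e j).2
  · -- kernel of proj meets H trivially: proj is injective on H
    push_neg at hK
    have hinj : Set.InjOn (proj m) (H : Set (Zn (m + 1))) := by
      intro x hx y hy hxy
      have hsub' : x - y ∈ H := H.sub_mem hx hy
      have : proj m (x - y) = 0 := by rw [map_sub, hxy, sub_self]
      have h0 : x - y = 0 := by
        by_contra hne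
        exact hne (hK _ hsub' this)
      exact sub_eq_zero.1 h0
    rw [image_diff_iUnion hinj le_rfl hsub]
    refine cosetE_diff_bc ?_ fun i => ?_
    · refine CosetE.image_hom ?_ (proj m)
      rw [coe_eq_cst_zero]
      exact IsCoset.cosetE ⟨_, _, rfl⟩
    · exact CosetE.image_hom (IsCoset.cosetE ⟨_, _, rfl⟩) (proj m)

end Part3
section Part4
open Set

lemma basic_proj {m : ℕ} {T : Set (Zn (m + 1))} (hT : Basic T) :
    BoolCombCosets (proj m '' T) := by
  classical
  obtain ⟨ι, _, C, D, hC, hD, rfl⟩ := hT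
  rcases hC with rfl | ⟨a, H, rfl⟩
  · rw [Set.empty_diff, Set.image_empty]; exact bc_empty
  have hrw : cst a H \ ⋃ i, D i = cst a H \ ⋃ i, (D i ∩ cst a H) := by
    ext x; simp only [mem_diff, mem_iUnion, not_exists, mem_inter_iff]; tauto
  rw [hrw]
  have hrw2 : (⋃ i, (D i ∩ cst a H))
      = ⋃ i : {i // (D i ∩ cst a H).Nonempty}, (D i.1 ∩ cst a H) := by
    ext x
    simp only [mem_iUnion]
    constructor
    · rintro ⟨i, hi⟩; exact ⟨⟨i, ⟨x, hi⟩⟩, hi⟩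
    · rintro ⟨i, hi⟩; exact ⟨i.1, hi⟩
  rw [hrw2]
  have hcoset : ∀ i : {i // (D i ∩ cst a H).Nonempty}, ∃ p q, D i.1 ∩ cst a H = cst p q := by
    intro i
    rcases CosetE.inter (hD i.1).cosetE (IsCoset.cosetE ⟨a, H, rfl⟩) with h | h
    · exact absurd (h ▸ i.2) (by simp)
    · exact h
  choose p q hpq using hcoset
  have e := (@Fintype.equivFin {i // (D i ∩ cst a H).Nonempty} (Fintype.ofFinite _)).symm
  rw [iUnion_equiv e]
  have hrw3 : (⋃ j, (D (e j).1 ∩ cst a H)) = ⋃ j, cst (p (e j)) (q (e j)) :=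
    Set.iUnion_congr fun j => hpq (e j)
  rw [hrw3]
  have hsub2 : ∀ j, cst (p (e j)) (q (e j)) ⊆ cst a H := by
    intro j
    rw [← hpq]
    exact Set.inter_subset_right
  have hsub3 : ∀ j, cst (-a + p (e j)) (q (e j)) ⊆ (H : Set (Zn (m + 1))) := by
    intro j x hx
    rw [mem_cst] at hx
    have h1 : a + x ∈ cst (p (e j)) (q (e j)) := mem_cst.2 (by convert hx using 1; ring)
    have h2 := hsub2 j h1
    rw [mem_cst] at h2
    simpa using h2
  have htrans : (a + ·) '' ((H : Set (Zn (m + 1))) \ ⋃ j, cst (-a + p (e j)) (q (e j)))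
      = cst a H \ ⋃ j, cst (p (e j)) (q (e j)) := by
    rw [Set.image_diff (add_right_injective a), Set.image_iUnion]
    congr 1
    exact Set.iUnion_congr fun j => by rw [cst_translate]; congr 1; ring_nf
  rw [← htrans]
  have hcomm : proj m '' ((a + ·) ''
        ((H : Set (Zn (m + 1))) \ ⋃ j, cst (-a + p (e j)) (q (e j))))
      = (proj m a + ·) '' (proj m ''
        ((H : Set (Zn (m + 1))) \ ⋃ j, cst (-a + p (e j)) (q (e j)))) := by
    rw [← Set.image_comp, ← Set.image_comp]
    exact Set.image_congr fun x _ => map_add (proj m) a x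
  rw [hcomm]
  exact (core H _ _ hsub3).translate (proj m a)

lemma bc_proj {m : ℕ} {S : Set (Zn (m + 1))} (hS : BoolCombCosets S) :
    BoolCombCosets (proj m '' S) := by
  obtain ⟨ι, _, B, hB, rfl⟩ := hS.nf
  rw [Set.image_iUnion]
  exact bc_iUnion fun i => basic_proj (hB i)

end Part4
section Part5
open FirstOrder Language Set

lemma term_affine {α : Type*} [Fintype α]
    (t : (LangGrp[[(Set.univ : Set ℤ)]]).Term α) :
    ∃ (c : ℤ) (q : α → ℤ), ∀ w : α → ℤ, t.realize w = c + ∑ i, q i * w i := by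
  classical
  induction t with
  | var i =>
    refine ⟨0, fun j => if j = i then 1 else 0, fun w => ?_⟩
    simp [Term.realize, Finset.sum_ite_eq', ite_mul]
  | @func l f ts ih =>
    match l, f with
    | 0, Sum.inl _ =>
      refine ⟨0, fun _ => 0, fun w => ?_⟩
      erw [Term.realize_func]
      show (0 : ℤ) = 0 + ∑ i, 0 * w i
      simp
    | 0, Sum.inr c =>
      refine ⟨(c : ℤ), fun _ => 0, fun w => ?_⟩
      erw [Term.realize_func]
      show (c : ℤ) = (c : ℤ) + ∑ i, 0 * w i
      simp
    | 2, Sum.inl _ =>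
      obtain ⟨c0, q0, h0⟩ := ih 0
      obtain ⟨c1, q1, h1⟩ := ih 1
      refine ⟨c0 + c1, fun i => q0 i + q1 i, fun w => ?_⟩
      erw [Term.realize_func]
      show Term.realize w (ts 0) + Term.realize w (ts 1) = _
      rw [h0, h1]
      simp only [add_mul, Finset.sum_add_distrib]
      ring
    | 1, f => rcases f with f | f <;> exact f.elim
    | 2, Sum.inr f => exact f.elim
    | (l + 3), f => rcases f with f | f <;> exact f.elim

lemma atomic_bc {N : ℕ} (q : Fin N → ℤ) (d : ℤ) :
    BoolCombCosets {f : Zn N | (∑ i, q i * f i) = d} := by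
  classical
  set ℓ : Zn N →+ ℤ :=
    { toFun := fun f => ∑ i, q i * f i
      map_zero' := by simp
      map_add' := by
        intro x y
        simp only [Pi.add_apply, mul_add]
        rw [Finset.sum_add_distrib] } with hℓ
  by_cases h : ∃ x0 : Zn N, ∑ i, q i * x0 i = d
  · obtain ⟨x0, hx0⟩ := h
    have key : {f : Zn N | (∑ i, q i * f i) = d} = cst x0 ℓ.ker := by
      ext x
      rw [mem_cst]
      simp only [mem_setOf_eq, AddMonoidHom.mem_ker, map_sub]
      have hx : ℓ x = ∑ i, q i * x i := rfl
      have hx0' : ℓ x0 = ∑ i, q i * x0 i := rfl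
      rw [hx, hx0', hx0]
      omega
    rw [key]
    exact IsCoset.bc ⟨_, _, rfl⟩
  · push_neg at h
    have key : {f : Zn N | (∑ i, q i * f i) = d} = ∅ := by
      ext x; simp only [mem_setOf_eq, mem_empty_iff_false, iff_false]; exact h x
    rw [key]
    exact bc_empty

/-- The set in `ℤ^(n+k)` defined by a bounded formula with `n` free and `k` bound variables. -/
def SetOfB {n k : ℕ} (φ : (LangGrp[[(Set.univ : Set ℤ)]]).BoundedFormula (Fin n) k) :
    Set (Zn (n + k)) :=
  {f | φ.Realize (fun i => f (Fin.castAdd k i)) (fun j => f (Fin.natAdd n j))}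

lemma snoc_index_v {n k : ℕ} (g : Zn (n + (k + 1))) (i : Fin n) :
    g (Fin.castAdd (k + 1) i) = (proj (n + k) g) (Fin.castAdd k i) := rfl

lemma snoc_index_xs {n k : ℕ} (g : Zn (n + (k + 1))) (j : Fin k) :
    g (Fin.natAdd n (Fin.castSucc j)) = (proj (n + k) g) (Fin.natAdd n j) := rfl

lemma snoc_index_last {n k : ℕ} (g : Zn (n + (k + 1))) :
    g (Fin.natAdd n (Fin.last k)) = val (m := n + k) g := rfl

lemma setOfB_bc {n k : ℕ} (φ : (LangGrp[[(Set.univ : Set ℤ)]]).BoundedFormula (Fin n) k) :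
    BoolCombCosets (SetOfB φ) := by
  induction φ with
  | @falsum k =>
    have key : SetOfB (n := n) (k := k) BoundedFormula.falsum = ∅ := by
      ext f; simp [SetOfB, BoundedFormula.Realize]
    rw [key]; exact bc_empty
  | @equal k t1 t2 =>
    obtain ⟨c1, q1, h1⟩ := term_affine t1
    obtain ⟨c2, q2, h2⟩ := term_affine t2
    have key : SetOfB (BoundedFormula.equal t1 t2)
        = {f : Zn (n + k) |
            ∑ i, (q1 (finSumFinEquiv.symm i) - q2 (finSumFinEquiv.symm i)) * f i = c2 - c1} := by
      ext f
      simp only [SetOfB, mem_setOf_eq]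
      rw [show (BoundedFormula.equal t1 t2).Realize
          (fun i => f (Fin.castAdd k i)) (fun j => f (Fin.natAdd n j))
          ↔ t1.realize (Sum.elim (fun i => f (Fin.castAdd k i)) (fun j => f (Fin.natAdd n j)))
            = t2.realize (Sum.elim (fun i => f (Fin.castAdd k i)) (fun j => f (Fin.natAdd n j)))
          from Iff.rfl]
      rw [h1, h2]
      have hsum : ∀ q : Fin n ⊕ Fin k → ℤ,
          ∑ i, q i * (Sum.elim (fun i => f (Fin.castAdd k i)) (fun j => f (Fin.natAdd n j))) i
          = ∑ i', q (finSumFinEquiv.symm i') * f i' := by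
        intro q
        rw [← Equiv.sum_comp finSumFinEquiv
          (fun i' => q (finSumFinEquiv.symm i') * f i')]
        refine Finset.sum_congr rfl fun i _ => ?_
        rcases i with i | j <;> simp
      rw [hsum q1, hsum q2]
      rw [show (∑ i, (q1 (finSumFinEquiv.symm i) - q2 (finSumFinEquiv.symm i)) * f i)
          = ∑ i, q1 (finSumFinEquiv.symm i) * f i - ∑ i, q2 (finSumFinEquiv.symm i) * f i
          from by rw [← Finset.sum_sub_distrib]
                  exact Finset.sum_congr rfl fun i _ => sub_mul _ _ _]
      omega
    rw [key]
    exact atomic_bc _ _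
  | @rel k l R ts => rcases R with R | R <;> exact R.elim
  | @imp k φ ψ ihφ ihψ =>
    have key : SetOfB (φ.imp ψ) = (SetOfB φ)ᶜ ∪ SetOfB ψ := by
      ext f
      simp only [SetOfB, mem_setOf_eq, mem_union, mem_compl_iff, BoundedFormula.realize_imp]
      tauto
    rw [key]
    exact ihφ.compl.union ihψ
  | @all k φ ih =>
    have hfun : ∀ g : Zn (n + (k + 1)),
        ((fun i => g (Fin.castAdd (k + 1) i)) = fun i => (proj (n + k) g) (Fin.castAdd k i))
        ∧ ((fun j : Fin (k + 1) => g (Fin.natAdd n j))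
            = Fin.snoc (fun j => (proj (n + k) g) (Fin.natAdd n j)) (val g)) := by
      intro g
      constructor
      · funext i; exact snoc_index_v g i
      · funext j
        refine Fin.lastCases ?_ ?_ j
        · rw [Fin.snoc_last]; exact snoc_index_last g
        · intro j'; rw [Fin.snoc_castSucc]; exact snoc_index_xs g j'
    have hmem_iff : ∀ g : Zn (n + (k + 1)), g ∈ SetOfB φ ↔
        φ.Realize (fun i => (proj (n + k) g) (Fin.castAdd k i))
          (Fin.snoc (fun j => (proj (n + k) g) (Fin.natAdd n j)) (val g)) := by
      intro g
      have h1 := (hfun g).1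
      have h2 := (hfun g).2
      simp only [SetOfB, mem_setOf_eq]
      rw [h1, h2]
    have key : SetOfB φ.all
        = ((proj (n + k)) '' (SetOfB (n := n) (k := k + 1) φ)ᶜ)ᶜ := by
      ext f
      simp only [SetOfB, mem_setOf_eq, mem_compl_iff, mem_image, not_exists, not_and]
      rw [BoundedFormula.realize_all]
      constructor
      · intro h g hgmem hgf
        exact hgmem ((hmem_iff g).2 (by rw [hgf]; exact h (val g)))
      · intro h z
        set g : Zn ((n + k) + 1) := Fin.snoc f z with hgdef
        have hgf : proj (n + k) g = f := by
          funext i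
          rw [proj_apply, hgdef, Fin.snoc_castSucc]
        have hval : val g = z := by rw [hgdef]; exact Fin.snoc_last _ _
        by_cases hmem : g ∈ SetOfB (n := n) (k := k + 1) φ
        · have hz2 := (hmem_iff g).1 hmem
          rw [hgf, hval] at hz2
          exact hz2
        · exact absurd hgf (h g (by simpa [SetOfB] using hmem))
    rw [key]
    exact (bc_proj ih.compl).compl

lemma realize0 {α : Type*} {L : Language} [L.Structure ℤ] (φ : L.BoundedFormula α 0)
    (v : α → ℤ) (xs : Fin 0 → ℤ) :
    Formula.Realize φ v = BoundedFormula.Realize φ v xs := by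
  unfold Formula.Realize
  exact congrArg _ (funext fun j => j.elim0)

lemma forward {n : ℕ} {A : Set (Zn n)} (h : IsGroupDefinable A) : BoolCombCosets A := by
  obtain ⟨φ, rfl⟩ := h
  have hbc := setOfB_bc (n := n) (k := 0) φ
  have key : ∀ f : Zn n, f ∈ SetOfB (n := n) (k := 0) φ ↔ Formula.Realize φ f := by
    intro f
    rw [realize0 φ f (fun j : Fin 0 => f (Fin.natAdd n j))]
    exact Iff.rfl
  have keyset : (Set.ofPred φ.Realize : Set (Zn n)) = SetOfB (n := n) (k := 0) φ :=
    Set.ext fun f => (key f).symm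
  rw [keyset]
  exact hbc

end Part5
section Part6
open FirstOrder Language Set

/-- The term `0`. -/
def tzero {β : Type*} : (LangGrp[[(Set.univ : Set ℤ)]]).Term β :=
  Term.func (Sum.inl (show LangGrp.Functions 0 from ())) ![]

/-- The term `t + s`. -/
def tadd {β : Type*} (t s : (LangGrp[[(Set.univ : Set ℤ)]]).Term β) :
    (LangGrp[[(Set.univ : Set ℤ)]]).Term β :=
  Term.func (Sum.inl (show LangGrp.Functions 2 from ())) ![t, s]

/-- The constant term `c`. -/
def tconst {β : Type*} (c : ℤ) : (LangGrp[[(Set.univ : Set ℤ)]]).Term β :=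
  Term.func (Sum.inr (show (constantsOn (Set.univ : Set ℤ)).Functions 0 from ⟨c, Set.mem_univ c⟩)) ![]

lemma realize_tzero {β : Type*} (w : β → ℤ) : (tzero (β := β)).realize w = 0 := rfl

lemma realize_tadd {β : Type*} (t s : (LangGrp[[(Set.univ : Set ℤ)]]).Term β) (w : β → ℤ) :
    (tadd t s).realize w = t.realize w + s.realize w := rfl

lemma realize_tconst {β : Type*} (c : ℤ) (w : β → ℤ) : (tconst (β := β) c).realize w = c := rfl

/-- `c`-fold sum of a term. -/
def tnsmul {β : Type*} : ℕ → (LangGrp[[(Set.univ : Set ℤ)]]).Term β →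
    (LangGrp[[(Set.univ : Set ℤ)]]).Term β
  | 0, _ => tzero
  | (c + 1), t => tadd (tnsmul c t) t

lemma realize_tnsmul {β : Type*} (c : ℕ) (t : (LangGrp[[(Set.univ : Set ℤ)]]).Term β)
    (w : β → ℤ) : (tnsmul c t).realize w = (c : ℤ) * t.realize w := by
  induction c with
  | zero => rw [tnsmul, realize_tzero]; ring
  | succ c ih =>
    rw [tnsmul, realize_tadd, ih]
    push_cast
    ring

/-- Sum of finitely many terms. -/
def tsum {β : Type*} : ∀ {k : ℕ}, (Fin k → (LangGrp[[(Set.univ : Set ℤ)]]).Term β) →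
    (LangGrp[[(Set.univ : Set ℤ)]]).Term β
  | 0, _ => tzero
  | (_ + 1), ts => tadd (ts 0) (tsum fun i => ts i.succ)

lemma realize_tsum {β : Type*} {k : ℕ} (ts : Fin k → (LangGrp[[(Set.univ : Set ℤ)]]).Term β)
    (w : β → ℤ) : (tsum ts).realize w = ∑ i, (ts i).realize w := by
  induction k with
  | zero => rw [tsum, realize_tzero]; simp
  | succ k ih =>
    rw [tsum, realize_tadd, ih, Fin.sum_univ_succ]

lemma coset_definable {n : ℕ} (a : Zn n) (H : AddSubgroup (Zn n)) :
    IsGroupDefinable (cst a H) := by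
  classical
  obtain ⟨s, hs⟩ : (AddSubgroup.toIntSubmodule H).FG := IsNoetherian.noetherian _
  set k := s.card with hk
  set g : Fin k → Zn n := fun i => ((s.equivFin.symm i : s) : Zn n) with hg
  have hrange : Set.range g = (s : Set (Zn n)) := by
    ext x
    constructor
    · rintro ⟨i, rfl⟩; exact (s.equivFin.symm i).2
    · intro hx
      exact ⟨s.equivFin ⟨x, hx⟩, by rw [hg]; simp⟩
  have hmemH : ∀ x : Zn n, x ∈ H ↔ ∃ c : Fin k → ℤ, ∑ i, c i • g i = x := by
    intro x
    have h1 : x ∈ H ↔ x ∈ Submodule.span ℤ (Set.range g) := by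
      rw [hrange, hs]
      exact Iff.rfl
    rw [h1, Submodule.mem_span_range_iff_exists_fun]
  -- the defining formulas
  set t1 : Fin n → (LangGrp[[(Set.univ : Set ℤ)]]).Term (Fin n ⊕ Fin k) := fun j =>
    tadd (Term.var (Sum.inl j)) (tsum fun i => tnsmul (-(g i j)).toNat (Term.var (Sum.inr i)))
    with ht1
  set t2 : Fin n → (LangGrp[[(Set.univ : Set ℤ)]]).Term (Fin n ⊕ Fin k) := fun j =>
    tadd (tconst (a j)) (tsum fun i => tnsmul (g i j).toNat (Term.var (Sum.inr i)))
    with ht2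
  set Sj : Fin n → Set ((Fin n ⊕ Fin k) → ℤ) := fun j =>
    Set.ofPred (Formula.Realize ((t1 j).equal (t2 j))) with hSj
  have hSjdef : ∀ j, Set.Definable (Set.univ : Set ℤ) LangGrp (Sj j) := fun j =>
    ⟨(t1 j).equal (t2 j), rfl⟩
  have hSdef : Set.Definable (Set.univ : Set ℤ) LangGrp (⋂ j, Sj j) := by
    have h2 := Set.definable_biInter_finset hSjdef Finset.univ
    have h3 : ⋂ i ∈ Finset.univ, Sj i = ⋂ j, Sj j := by ext x; simp
    rwa [h3] at h2
  have hSmem : ∀ h : (Fin n ⊕ Fin k) → ℤ,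
      h ∈ (⋂ j, Sj j) ↔ ∀ j, h (Sum.inl j) = a j + ∑ i, g i j * h (Sum.inr i) := by
    intro h
    rw [Set.mem_iInter]
    refine forall_congr' fun j => ?_
    rw [hSj]
    simp only [mem_setOf_eq]
    rw [Formula.realize_equal, ht1, ht2]
    rw [realize_tadd, realize_tadd, realize_tsum, realize_tsum, realize_tconst]
    simp only [realize_tnsmul, Term.realize_var]
    have hsub : ∑ i, ((g i j).toNat : ℤ) * h (Sum.inr i)
        - ∑ i, (((-(g i j)).toNat : ℕ) : ℤ) * h (Sum.inr i)
        = ∑ i, g i j * h (Sum.inr i) := by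
      rw [← Finset.sum_sub_distrib]
      refine Finset.sum_congr rfl fun i _ => ?_
      rw [← sub_mul]
      congr 1
      omega
    constructor
    · intro heq
      have := hsub
      omega
    · intro heq
      have := hsub
      omega
  have himage : cst a H = (fun h : (Fin n ⊕ Fin k) → ℤ => h ∘ Sum.inl) '' (⋂ j, Sj j) := by
    ext x
    rw [mem_cst, hmemH]
    constructor
    · rintro ⟨c, hc⟩
      refine ⟨Sum.elim x c, (hSmem _).2 fun j => ?_, rfl⟩
      have hcj := congrFun hc j
      rw [Finset.sum_apply] at hcj
      simp only [Pi.smul_apply, smul_eq_mul, Pi.sub_apply] at hcj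
      simp only [Sum.elim_inl, Sum.elim_inr]
      rw [show (∑ i, g i j * c i) = ∑ i, c i * g i j from
        Finset.sum_congr rfl fun i _ => mul_comm _ _]
      omega
    · rintro ⟨h, hh, rfl⟩
      rw [hSmem] at hh
      refine ⟨fun i => h (Sum.inr i), ?_⟩
      funext j
      have := hh j
      rw [Finset.sum_apply]
      simp only [Pi.smul_apply, smul_eq_mul, Pi.sub_apply, Function.comp_apply]
      rw [show (∑ i, h (Sum.inr i) * g i j) = ∑ i, g i j * h (Sum.inr i) from
        Finset.sum_congr rfl fun i _ => mul_comm _ _]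
      omega
  rw [IsGroupDefinable, himage]
  exact hSdef.image_comp Sum.inl

lemma backward {n : ℕ} {A : Set (Zn n)} (h : BoolCombCosets A) : IsGroupDefinable A := by
  induction h with
  | coset a H => exact coset_definable a H
  | compl h ih => exact Set.Definable.compl ih
  | union h1 h2 ih1 ih2 => exact Set.Definable.union ih1 ih2

end Part6
end Stmt3Aux

/-- a subset of `ℤⁿ` is definable in `(ℤ,+,0)` iff it is a finite Boolean
combination of cosets of subgroups of `ℤⁿ`. -/
theorem stmt3 {n : ℕ} (A : Set (Fin n → ℤ)) :
    IsGroupDefinable A ↔ BoolCombCosets A := by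
  exact ⟨Stmt3Aux.forward, Stmt3Aux.backward⟩
end

section
/- With C, α, Φ as above, for any subset X ⊆ C one has rk(Φ(X)) = rk(X), where rk denotes the rank of a subset (the least k such that the set is covered by finitely many cosets of rank at most k). -/
/-- A coset of a subgroup of `ℤⁿ`. -/
def IsCoset {n : ℕ} (S : Set (Fin n → ℤ)) : Prop :=
  ∃ (a : Fin n → ℤ) (H : AddSubgroup (Fin n → ℤ)), S = (a + ·) '' (H : Set (Fin n → ℤ))

/-- A coset of a rank-`k` subgroup of `ℤⁿ`. -/
def IsCosetOfRank {n : ℕ} (k : ℕ) (S : Set (Fin n → ℤ)) : Prop :=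
  ∃ (a : Fin n → ℤ) (H : AddSubgroup (Fin n → ℤ)),
    Module.finrank ℤ H = k ∧ S = (a + ·) '' (H : Set (Fin n → ℤ))

/-- `X` is contained in a finite union of cosets of subgroups of rank at most `k`. -/
def CoveredByRank {n : ℕ} (X : Set (Fin n → ℤ)) (k : ℕ) : Prop :=
  ∃ (m : ℕ) (C : Fin m → Set (Fin n → ℤ)),
    (∀ i, ∃ ki ≤ k, IsCosetOfRank ki (C i)) ∧ X ⊆ ⋃ i, C i

open Classical in
/-- The rank of a subset of `ℤⁿ`: the least `k` such that `X` is covered by finitely many cosets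
of rank at most `k`, with `rk(∅) = -1`. -/
noncomputable def setRank {n : ℕ} (X : Set (Fin n → ℤ)) : ℤ :=
  if X = ∅ then -1 else ((sInf {k : ℕ | CoveredByRank X k} : ℕ) : ℤ)

variable {n k : ℕ}

/-- The parametrization of the coset `c + G` by `ℤᵏ` determined by a basis of `G`. -/
noncomputable def cosetParam (c : Fin n → ℤ) (G : AddSubgroup (Fin n → ℤ))
    (α : Module.Basis (Fin k) ℤ G) : (Fin k → ℤ) → (Fin n → ℤ) :=
  fun t => c + ∑ i : Fin k, t i • ((α i : Fin n → ℤ))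

/-! ### Auxiliary machinery -/

section Aux

/-- The linear map `ℤᵏ → ℤⁿ` underlying the coset parametrization. -/
noncomputable def Lmap (G : AddSubgroup (Fin n → ℤ)) (α : Module.Basis (Fin k) ℤ G) :
    (Fin k → ℤ) →ₗ[ℤ] (Fin n → ℤ) where
  toFun t := ∑ i : Fin k, t i • ((α i : Fin n → ℤ))
  map_add' s t := by
    simp [add_smul, Finset.sum_add_distrib]
  map_smul' r t := by
    simp [mul_smul, Finset.smul_sum]

lemma coe_sum_smul (G : AddSubgroup (Fin n → ℤ)) (α : Module.Basis (Fin k) ℤ G) (t : Fin k → ℤ) :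
    ((∑ i : Fin k, t i • α i : G) : Fin n → ℤ) = ∑ i : Fin k, t i • ((α i : Fin n → ℤ)) := by
  push_cast
  rfl

lemma Lmap_coe (G : AddSubgroup (Fin n → ℤ)) (α : Module.Basis (Fin k) ℤ G) (t : Fin k → ℤ) :
    Lmap G α t = ((∑ i : Fin k, t i • α i : G) : Fin n → ℤ) := (coe_sum_smul G α t).symm

lemma Lmap_inj (G : AddSubgroup (Fin n → ℤ)) (α : Module.Basis (Fin k) ℤ G) :
    Function.Injective (Lmap G α) := by
  intro s t h
  rw [Lmap_coe, Lmap_coe] at h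
  have h2 : (∑ i : Fin k, s i • α i : G) = ∑ i : Fin k, t i • α i := Subtype.ext h
  have h3 : α.equivFun.symm s = α.equivFun.symm t := by
    rw [Module.Basis.equivFun_symm_apply, Module.Basis.equivFun_symm_apply]; exact h2
  exact α.equivFun.symm.injective h3

lemma Lmap_range (G : AddSubgroup (Fin n → ℤ)) (α : Module.Basis (Fin k) ℤ G) :
    Set.range (Lmap G α) = (G : Set (Fin n → ℤ)) := by
  ext x
  constructor
  · rintro ⟨t, rfl⟩
    rw [Lmap_coe]; exact (∑ i : Fin k, t i • α i : G).2
  · intro hx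
    refine ⟨α.equivFun ⟨x, hx⟩, ?_⟩
    rw [Lmap_coe]
    have : (∑ i : Fin k, α.equivFun ⟨x, hx⟩ i • α i : G) = ⟨x, hx⟩ := by
      rw [← Module.Basis.equivFun_symm_apply, LinearEquiv.symm_apply_apply]
    rw [this]

variable {m p : ℕ}

lemma singleton_coset {q : ℕ} (x : Fin q → ℤ) : IsCosetOfRank 0 ({x} : Set (Fin q → ℤ)) := by
  refine ⟨x, ⊥, ?_, ?_⟩
  · exact Module.finrank_zero_of_subsingleton
  · ext y; simp [eq_comm]

lemma isCosetOfRank_image (L : (Fin m → ℤ) →ₗ[ℤ] (Fin p → ℤ))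
    (hL : Function.Injective L) (c : Fin p → ℤ) {ki : ℕ} {S : Set (Fin m → ℤ)}
    (hS : IsCosetOfRank ki S) : IsCosetOfRank ki ((fun t => c + L t) '' S) := by
  obtain ⟨a, H, hrank, rfl⟩ := hS
  refine ⟨c + L a, (H.toIntSubmodule.map L).toAddSubgroup, ?_, ?_⟩
  · have e := (Submodule.equivMapOfInjective L hL H.toIntSubmodule).finrank_eq
    rw [show Module.finrank ℤ (H.toIntSubmodule.map L).toAddSubgroup
        = Module.finrank ℤ (H.toIntSubmodule.map L) from rfl, ← e]
    exact hrank
  · ext x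
    simp only [Set.mem_image, Submodule.coe_toAddSubgroup, Submodule.map_coe,
      AddSubgroup.coe_toIntSubmodule]
    constructor
    · rintro ⟨-, ⟨h, hh, rfl⟩, rfl⟩
      exact ⟨L h, ⟨h, hh, rfl⟩, by rw [map_add]; ring⟩
    · rintro ⟨-, ⟨h, hh, rfl⟩, rfl⟩
      exact ⟨a + h, ⟨h, hh, rfl⟩, by rw [map_add]; ring⟩

lemma isCosetOfRank_preimage (L : (Fin m → ℤ) →ₗ[ℤ] (Fin p → ℤ))
    (hL : Function.Injective L) (c : Fin p → ℤ) {ki : ℕ} {S : Set (Fin p → ℤ)}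
    (hS : IsCosetOfRank ki S) :
    ((fun t => c + L t) ⁻¹' S) = ∅ ∨
      ∃ ki' ≤ ki, IsCosetOfRank ki' ((fun t => c + L t) ⁻¹' S) := by
  obtain ⟨a, H, hrank, rfl⟩ := hS
  by_cases hne : ((fun t => c + L t) ⁻¹' ((a + ·) '' (H : Set (Fin p → ℤ)))) = ∅
  · exact Or.inl hne
  right
  obtain ⟨t₀, ht₀⟩ := Set.nonempty_iff_ne_empty.2 hne
  obtain ⟨h₀, hh₀, ht₀'⟩ := ht₀
  set K := H.toIntSubmodule.comap L with hK
  refine ⟨Module.finrank ℤ K, ?_, t₀, K.toAddSubgroup, rfl, ?_⟩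
  · have e := (Submodule.equivMapOfInjective L hL K).finrank_eq
    rw [e, ← hrank]
    exact Submodule.finrank_mono (Submodule.map_comap_le L _)
  · ext t
    simp only [Set.mem_preimage, Set.mem_image, Submodule.coe_toAddSubgroup,
      SetLike.mem_coe]
    constructor
    · rintro ⟨h, hh, hth⟩
      refine ⟨t - t₀, ?_, by ring⟩
      rw [Submodule.mem_comap, map_sub]
      have h1 : L t = a + h - c := by rw [hth]; ring
      have h2 : L t₀ = (a + h₀) - c := by
        have hab : a + h₀ = c + L t₀ := ht₀'
        rw [hab]; ring
      have h3 : L t - L t₀ = h - h₀ := by rw [h1, h2]; ring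
      rw [h3]
      exact sub_mem hh hh₀
    · rintro ⟨u, hu, rfl⟩
      rw [Submodule.mem_comap] at hu
      refine ⟨h₀ + L u, add_mem hh₀ hu, ?_⟩
      have hab : a + h₀ = c + L t₀ := ht₀'
      rw [map_add, ← add_assoc, hab, add_assoc]

lemma coveredByRank_image (L : (Fin m → ℤ) →ₗ[ℤ] (Fin p → ℤ))
    (hL : Function.Injective L) (c : Fin p → ℤ) {Y : Set (Fin m → ℤ)} {j : ℕ}
    (h : CoveredByRank Y j) : CoveredByRank ((fun t => c + L t) '' Y) j := by
  obtain ⟨m', C, hC, hY⟩ := h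
  refine ⟨m', fun i => (fun t => c + L t) '' C i, fun i => ?_, ?_⟩
  · obtain ⟨ki, hki, hc⟩ := hC i
    exact ⟨ki, hki, isCosetOfRank_image L hL c hc⟩
  · rw [← Set.image_iUnion]
    exact Set.image_mono hY

open Classical in
lemma coveredByRank_preimage (L : (Fin m → ℤ) →ₗ[ℤ] (Fin p → ℤ))
    (hL : Function.Injective L) (c : Fin p → ℤ) {X : Set (Fin p → ℤ)} {j : ℕ}
    (h : CoveredByRank X j) : CoveredByRank ((fun t => c + L t) ⁻¹' X) j := by
  obtain ⟨m', C, hC, hX⟩ := h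
  refine ⟨m', fun i => if ((fun t => c + L t) ⁻¹' C i) = ∅ then {0}
      else (fun t => c + L t) ⁻¹' C i, fun i => ?_, ?_⟩
  · by_cases he : ((fun t => c + L t) ⁻¹' C i) = ∅
    · simp only [if_pos he]
      exact ⟨0, Nat.zero_le _, singleton_coset 0⟩
    · simp only [if_neg he]
      obtain ⟨ki, hki, hc⟩ := hC i
      rcases isCosetOfRank_preimage L hL c hc with h1 | ⟨ki', hki', hc'⟩
      · exact absurd h1 he
      · exact ⟨ki', le_trans hki' hki, hc'⟩
  · intro t ht
    obtain ⟨i, hi⟩ := Set.mem_iUnion.1 (hX ht)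
    refine Set.mem_iUnion.2 ⟨i, ?_⟩
    have hne : ((fun t => c + L t) ⁻¹' C i) ≠ ∅ :=
      Set.nonempty_iff_ne_empty.1 ⟨t, hi⟩
    simp only [if_neg hne]
    exact hi

end Aux

/-- the parametrization of a coset by `ℤᵏ` preserves the rank of arbitrary
subsets. -/
theorem stmt8 (c : Fin n → ℤ) (G : AddSubgroup (Fin n → ℤ)) (α : Module.Basis (Fin k) ℤ G)
    (X : Set (Fin n → ℤ)) (hX : X ⊆ (c + ·) '' (G : Set (Fin n → ℤ))) :
    setRank (cosetParam c G α ⁻¹' X) = setRank X := by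
  have hfeq : cosetParam c G α = fun t => c + Lmap G α t := rfl
  have hrange : Set.range (cosetParam c G α) = (c + ·) '' (G : Set (Fin n → ℤ)) := by
    rw [hfeq]
    ext x
    constructor
    · rintro ⟨t, rfl⟩
      exact ⟨Lmap G α t, by rw [← Lmap_range G α]; exact ⟨t, rfl⟩, rfl⟩
    · rintro ⟨g, hg, rfl⟩
      rw [← Lmap_range G α] at hg
      obtain ⟨t, rfl⟩ := hg
      exact ⟨t, rfl⟩
  have hsub : X ⊆ Set.range (cosetParam c G α) := hrange ▸ hX
  have himg : cosetParam c G α '' (cosetParam c G α ⁻¹' X) = X :=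
    Set.image_preimage_eq_of_subset hsub
  by_cases hXe : X = ∅
  · subst hXe
    rw [Set.preimage_empty]
    simp [setRank]
  · have hYe : cosetParam c G α ⁻¹' X ≠ ∅ := by
      intro h
      apply hXe
      rw [← himg, h, Set.image_empty]
    rw [setRank, setRank, if_neg hYe, if_neg hXe]
    have hsets : {j : ℕ | CoveredByRank (cosetParam c G α ⁻¹' X) j}
        = {j : ℕ | CoveredByRank X j} := by
      ext j
      constructor
      · intro hj
        have := coveredByRank_image (Lmap G α) (Lmap_inj G α) c hj
        rw [← hfeq, himg] at this
        exact this
      · intro hj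
        have := coveredByRank_preimage (Lmap G α) (Lmap_inj G α) c hj
        rw [← hfeq] at this
        exact this
    rw [hsets]
end

section
/- If Q, P_1, ..., P_k are polyhedra in R^n with Q ⊆ P_1 ∪ ... ∪ P_k and Q has infinite inradius, then some P_i has infinite inradius. -/
open scoped ENNReal

/-- The inradius of a subset of `ℝⁿ`: the supremum of radii of closed balls contained in it
(possibly `∞`). -/
noncomputable def inradius {n : ℕ} (P : Set (EuclideanSpace ℝ (Fin n))) : ℝ≥0∞ :=
  ⨆ (x : EuclideanSpace ℝ (Fin n)) (r : NNReal) (_ : Metric.closedBall x (r : ℝ) ⊆ P),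
    (r : ℝ≥0∞)

/-- A half-space in `ℝⁿ`: one of the four sets determined by a non-constant affine map. -/
def IsHalfSpace {n : ℕ} (S : Set (EuclideanSpace ℝ (Fin n))) : Prop :=
  ∃ f : EuclideanSpace ℝ (Fin n) →ᵃ[ℝ] ℝ, (¬ ∃ c, ∀ x, f x = c) ∧
    (S = {x | 0 < f x} ∨ S = {x | f x < 0} ∨ S = {x | 0 ≤ f x} ∨ S = {x | f x ≤ 0})

/-- A polyhedron in `ℝⁿ`: a finite intersection of (open or closed) half-spaces. -/
def IsPolyhedron {n : ℕ} (S : Set (EuclideanSpace ℝ (Fin n))) : Prop :=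
  ∃ (m : ℕ) (H : Fin m → Set (EuclideanSpace ℝ (Fin n))),
    (∀ i, IsHalfSpace (H i)) ∧ S = ⋂ i, H i

open Metric
open scoped RealInnerProductSpace

/-- Every half-space is squeezed between an open and a closed half-space given by a
non-degenerate affine functional. -/
lemma halfspace_repr {n : ℕ} {H : Set (EuclideanSpace ℝ (Fin n))} (h : IsHalfSpace H) :
    ∃ g : EuclideanSpace ℝ (Fin n) →ᵃ[ℝ] ℝ, g.linear ≠ 0 ∧
      {x | 0 < g x} ⊆ H ∧ H ⊆ {x | 0 ≤ g x} := by
  obtain ⟨f, hnc, hcase⟩ := h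
  have hlin : f.linear ≠ 0 := by
    intro h0
    apply hnc
    refine ⟨f 0, fun x => ?_⟩
    have := f.map_vadd 0 x
    simpa [h0] using this
  have hneg : ∀ x, (-f) x = -(f x) := fun x => rfl
  have hlinneg : (-f).linear ≠ 0 := by
    have : (-f).linear = -f.linear := rfl
    rw [this]
    simpa using hlin
  rcases hcase with h | h | h | h
  · exact ⟨f, hlin, by rw [h], by rw [h]; intro x hx; simp only [Set.mem_setOf_eq] at hx ⊢; exact le_of_lt hx⟩
  · refine ⟨-f, hlinneg, ?_, ?_⟩
    · rw [h]; intro x hx; simp only [Set.mem_setOf_eq, hneg] at hx ⊢; linarith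
    · rw [h]; intro x hx; simp only [Set.mem_setOf_eq, hneg] at hx ⊢; linarith
  · exact ⟨f, hlin, by rw [h]; intro x hx; simp only [Set.mem_setOf_eq] at hx ⊢; exact le_of_lt hx, by rw [h]⟩
  · refine ⟨-f, hlinneg, ?_, ?_⟩
    · rw [h]; intro x hx; simp only [Set.mem_setOf_eq, hneg] at hx ⊢; linarith
    · rw [h]; intro x hx; simp only [Set.mem_setOf_eq, hneg] at hx ⊢; linarith

/-- If a closed ball of radius `r` is inside a closed half-space, any concentric closed ball of
strictly smaller radius is inside the corresponding open half-space. -/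
lemma ball_shrink {n : ℕ} {g : EuclideanSpace ℝ (Fin n) →ᵃ[ℝ] ℝ} (hg : g.linear ≠ 0)
    {x : EuclideanSpace ℝ (Fin n)} {r r' : ℝ} (h : closedBall x r ⊆ {y | 0 ≤ g y})
    (h0 : 0 ≤ r') (hlt : r' < r) : closedBall x r' ⊆ {y | 0 < g y} := by
  set L := LinearMap.toContinuousLinearMap g.linear with hL
  set w := (InnerProductSpace.toDual ℝ (EuclideanSpace ℝ (Fin n))).symm L with hwdef
  have hwv : ∀ v, ⟪w, v⟫ = g.linear v := by
    intro v
    have : ⟪w, v⟫ = L v := InnerProductSpace.toDual_symm_apply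
    simpa [hL] using this
  have hw : w ≠ 0 := by
    intro h0'
    apply hg
    ext v
    have := hwv v
    rw [h0'] at this
    simpa using this.symm
  have hwn : 0 < ‖w‖ := norm_pos_iff.mpr hw
  have hgy : ∀ v : EuclideanSpace ℝ (Fin n), g (x + v) = g x + g.linear v := by
    intro v
    have := g.map_vadd x v
    simpa [add_comm] using this
  have hx : r * ‖w‖ ≤ g x := by
    have hmem : x + (-(r • ‖w‖⁻¹ • w)) ∈ closedBall x r := by
      simp only [mem_closedBall, dist_eq_norm, add_sub_cancel_left, norm_neg, norm_smul,
        norm_inv, norm_norm, Real.norm_eq_abs, abs_norm]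
      rw [abs_of_nonneg (le_of_lt (lt_of_le_of_lt h0 hlt))]
      rw [inv_mul_cancel₀ (ne_of_gt hwn)]
      simp
    have h1 : 0 ≤ g (x + (-(r • ‖w‖⁻¹ • w))) := h hmem
    rw [hgy] at h1
    have h2 : g.linear (-(r • ‖w‖⁻¹ • w)) = -(r * ‖w‖) := by
      rw [← hwv]
      rw [inner_neg_right, real_inner_smul_right, real_inner_smul_right,
        real_inner_self_eq_norm_sq]
      field_simp
    rw [h2] at h1
    linarith
  intro y hy
  have hvy : ‖y - x‖ ≤ r' := by simpa [dist_eq_norm] using (mem_closedBall.mp hy)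
  have hyx : g y = g x + g.linear (y - x) := by
    have := hgy (y - x)
    simpa using this
  have hib : -(‖w‖ * r') ≤ g.linear (y - x) := by
    rw [← hwv]
    have h1 := abs_real_inner_le_norm w (y - x)
    have h2 : ‖w‖ * ‖y - x‖ ≤ ‖w‖ * r' := by
      exact mul_le_mul_of_nonneg_left hvy (le_of_lt hwn)
    have h3 := neg_abs_le (⟪w, y - x⟫)
    linarith
  show 0 < g y
  rw [hyx]
  nlinarith

/-- If a real `r : NNReal` ball around `x` sits inside `P` then `r ≤ inradius P`. -/
lemma le_inradius {n : ℕ} {P : Set (EuclideanSpace ℝ (Fin n))} {x : EuclideanSpace ℝ (Fin n)}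
    {r : NNReal} (h : closedBall x (r : ℝ) ⊆ P) : (r : ℝ≥0∞) ≤ inradius P := by
  unfold inradius
  exact le_iSup_of_le x (le_iSup_of_le r (le_iSup_of_le h le_rfl))

/-- Key covering lemma: if `j` closed convex sets each contain no closed ball of radius `ρ`,
then inside any closed ball of radius `(2^j - 1) * ρ` there is a point avoiding all of them. -/
lemma key_avoid {n : ℕ} (ρ : ℝ) (hρ : 0 ≤ ρ) (j : ℕ) :
    ∀ (C : Fin j → Set (EuclideanSpace ℝ (Fin n))),
      (∀ i, IsClosed (C i)) → (∀ i, Convex ℝ (C i)) →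
      (∀ i x, ¬ closedBall x ρ ⊆ C i) →
      ∀ x, ∃ y ∈ closedBall x ((2 ^ j - 1) * ρ), ∀ i, y ∉ C i := by
  induction j with
  | zero =>
    intro C _ _ _ x
    exact ⟨x, by simp, fun i => i.elim0⟩
  | succ j ih =>
    intro C hcl hcv hno x
    set Rj : ℝ := (2 ^ j - 1) * ρ with hRj
    have h2j : (1 : ℝ) ≤ 2 ^ j := one_le_pow₀ (by norm_num)
    have hRj0 : 0 ≤ Rj := mul_nonneg (by linarith) hρ
    obtain ⟨y₀, hy₀b, hy₀⟩ := Set.not_subset.mp (hno 0 x)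
    obtain ⟨f, u, hfu, hy₀f⟩ := geometric_hahn_banach_closed_point (hcv 0) (hcl 0) hy₀
    set w := (InnerProductSpace.toDual ℝ (EuclideanSpace ℝ (Fin n))).symm f with hwdef
    have hwv : ∀ v, ⟪w, v⟫ = f v := fun v => InnerProductSpace.toDual_symm_apply
    set z := Rj • ‖w‖⁻¹ • w + y₀ with hz
    have hww : ‖w‖⁻¹ * (‖w‖ ^ 2) = ‖w‖ := by
      rcases eq_or_ne ‖w‖ 0 with h | h
      · simp [h]
      · field_simp
    have hfz : f z = f y₀ + Rj * ‖w‖ := by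
      rw [hz, map_add, map_smul, map_smul, smul_eq_mul, smul_eq_mul, ← hwv w,
        real_inner_self_eq_norm_sq]
      rw [hww]
      ring
    have hzsub : ∀ p ∈ closedBall z Rj, u < f p := by
      intro p hp
      have hv : ‖p - z‖ ≤ Rj := by simpa [dist_eq_norm] using (mem_closedBall.mp hp)
      have hfp : f p = f z + f (p - z) := by
        rw [← map_add]
        congr 1
        abel
      have hib : -(‖w‖ * Rj) ≤ f (p - z) := by
        rw [← hwv]
        have h1 := abs_real_inner_le_norm w (p - z)
        have h2 : ‖w‖ * ‖p - z‖ ≤ ‖w‖ * Rj :=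
          mul_le_mul_of_nonneg_left hv (norm_nonneg w)
        have h3 := neg_abs_le (⟪w, p - z⟫)
        linarith
      rw [hfp, hfz]
      nlinarith [norm_nonneg w]
    have hzdist : dist z y₀ ≤ Rj := by
      rw [hz]
      simp only [dist_eq_norm, add_sub_cancel_right, norm_smul, norm_inv, norm_norm,
        Real.norm_eq_abs, abs_norm]
      rcases eq_or_ne ‖w‖ 0 with h | h
      · simpa [h, abs_of_nonneg hRj0] using hRj0
      · rw [abs_of_nonneg hRj0, inv_mul_cancel₀ h]
        simp
    have hzball : closedBall z Rj ⊆ closedBall x ((2 ^ (j + 1) - 1) * ρ) := by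
      intro p hp
      have h1 : dist p z ≤ Rj := mem_closedBall.mp hp
      have h2 : dist y₀ x ≤ ρ := mem_closedBall.mp hy₀b
      have h3 := dist_triangle4 p z y₀ x
      have h4 : (2 ^ (j + 1) - 1) * ρ = Rj + Rj + ρ := by rw [hRj]; ring
      rw [mem_closedBall, h4]
      linarith
    obtain ⟨y, hyb, hyn⟩ := ih (fun i => C i.succ) (fun i => hcl _) (fun i => hcv _)
      (fun i x' => hno _ x') z
    refine ⟨y, hzball hyb, ?_⟩
    intro i
    refine Fin.cases ?_ (fun i' => hyn i') i
    intro hc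
    exact lt_asymm (hzsub y hyb) (hfu y hc)

/-- if polyhedra cover a polyhedron of infinite inradius, one of them has infinite
inradius. -/
theorem stmt12 {n k : ℕ} (Q : Set (EuclideanSpace ℝ (Fin n)))
    (P : Fin k → Set (EuclideanSpace ℝ (Fin n)))
    (hQ : IsPolyhedron Q) (hP : ∀ i, IsPolyhedron (P i))
    (hcover : Q ⊆ ⋃ i, P i) (hr : inradius Q = ⊤) :
    ∃ i, inradius (P i) = ⊤ := by
  by_contra hcon
  push_neg at hcon
  have hP' : ∀ i, ∃ (m : ℕ) (g : Fin m → (EuclideanSpace ℝ (Fin n) →ᵃ[ℝ] ℝ))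
      (H : Fin m → Set (EuclideanSpace ℝ (Fin n))),
      (∀ j, (g j).linear ≠ 0) ∧ (∀ j, {x | 0 < g j x} ⊆ H j) ∧
      (∀ j, H j ⊆ {x | 0 ≤ g j x}) ∧ P i = ⋂ j, H j := by
    intro i
    obtain ⟨m, H, hH, hPi⟩ := hP i
    choose g h1 h2 h3 using fun j => halfspace_repr (hH j)
    exact ⟨m, g, H, h1, h2, h3, hPi⟩
  choose m g H hg hgH hHg hPeq using hP'
  set C : Fin k → Set (EuclideanSpace ℝ (Fin n)) :=
    fun i => ⋂ j, {x | 0 ≤ g i j x} with hCdef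
  have hPC : ∀ i, P i ⊆ C i := by
    intro i
    rw [hPeq i]
    exact Set.iInter_mono (fun j => hHg i j)
  have hcl : ∀ i, IsClosed (C i) := by
    intro i
    refine isClosed_iInter fun j => ?_
    exact IsClosed.preimage (g i j).continuous_of_finiteDimensional isClosed_Ici
  have hcv : ∀ i, Convex ℝ (C i) := by
    intro i
    refine convex_iInter fun j => ?_
    exact Convex.affine_preimage (g i j) (convex_Ici (0 : ℝ))
  have htrans : ∀ i (x : EuclideanSpace ℝ (Fin n)) (r r' : ℝ), 0 ≤ r' → r' < r →
      closedBall x r ⊆ C i → closedBall x r' ⊆ P i := by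
    intro i x r r' h0 hlt hsub
    rw [hPeq i]
    refine Set.subset_iInter fun j => ?_
    have hj : closedBall x r ⊆ {y | 0 ≤ g i j y} := hsub.trans (Set.iInter_subset _ j)
    exact (ball_shrink (hg i j) hj h0 hlt).trans (hgH i j)
  set M : Fin k → NNReal := fun i => (inradius (P i)).toNNReal with hMdef
  have hMi : ∀ i, inradius (P i) = (M i : ℝ≥0∞) := fun i =>
    (ENNReal.coe_toNNReal (hcon i)).symm
  have hbound : ∀ i (x : EuclideanSpace ℝ (Fin n)), ¬ closedBall x ((M i : ℝ) + 1) ⊆ C i := by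
    intro i x hsub
    have hsub' : closedBall x (((M i + 2⁻¹ : NNReal) : ℝ)) ⊆ P i := by
      have hcast : ((M i + 2⁻¹ : NNReal) : ℝ) = (M i : ℝ) + 2⁻¹ := by push_cast; ring
      rw [hcast]
      exact htrans i x ((M i : ℝ) + 1) ((M i : ℝ) + 2⁻¹) (by positivity) (by norm_num) hsub
    have h1 : ((M i + 2⁻¹ : NNReal) : ℝ≥0∞) ≤ inradius (P i) := le_inradius hsub'
    rw [hMi i] at h1
    have h2 : (M i : ℝ) + 2⁻¹ ≤ (M i : ℝ) := by exact_mod_cast ENNReal.coe_le_coe.mp h1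
    linarith
  set ρ : ℝ := (∑ i, (M i : ℝ)) + 1 with hρdef
  have hρ0 : 0 ≤ ρ := by positivity
  have hnoball : ∀ i (x : EuclideanSpace ℝ (Fin n)), ¬ closedBall x ρ ⊆ C i := by
    intro i x hsub
    have hle : (M i : ℝ) + 1 ≤ ρ := by
      rw [hρdef]
      have : (M i : ℝ) ≤ ∑ i', (M i' : ℝ) :=
        Finset.single_le_sum (fun i' _ => (M i').coe_nonneg) (Finset.mem_univ i)
      linarith
    exact hbound i x ((closedBall_subset_closedBall hle).trans hsub)
  obtain ⟨xc, r, hrsub, hBr⟩ : ∃ (xc : EuclideanSpace ℝ (Fin n)) (r : NNReal),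
      closedBall xc (r : ℝ) ⊆ Q ∧ (2 ^ k - 1) * ρ ≤ (r : ℝ) := by
    have h1 : ((((2 ^ k - 1) * ρ).toNNReal : ℝ≥0∞)) < inradius Q := by
      rw [hr]; exact ENNReal.coe_lt_top
    simp only [inradius, lt_iSup_iff] at h1
    obtain ⟨x, r, hsub, hlt⟩ := h1
    have hlt' : (((2 ^ k - 1) * ρ).toNNReal : ℝ) ≤ (r : ℝ) := by
      exact_mod_cast (ENNReal.coe_lt_coe.mp hlt).le
    exact ⟨x, r, hsub, le_trans (Real.le_coe_toNNReal _) hlt'⟩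
  obtain ⟨y, hyb, hyn⟩ := key_avoid ρ hρ0 k C hcl hcv hnoball xc
  have hyQ : y ∈ Q := hrsub (closedBall_subset_closedBall hBr hyb)
  obtain ⟨i, hyi⟩ := Set.mem_iUnion.mp (hcover hyQ)
  exact hyn i (hPC i hyi)
end

section
/- Let X ⊆ Z^n be a finite union of cosets of subgroups of Z^n each of rank < n, let P ⊆ R^n be a polyhedron with infinite inradius, and let Q_1,...,Q_k be polyhedra in R^n with P ∩ (Z^n \ X) ⊆ Q_1 ∪ ... ∪ Q_k. Then some Q_i has infinite inradius. -/
open scoped ENNReal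

/-- The inclusion of the integer lattice `ℤⁿ` into `ℝⁿ`. -/
def latticeMap {n : ℕ} (z : Fin n → ℤ) : EuclideanSpace ℝ (Fin n) := WithLp.toLp 2 (fun i => (z i : ℝ))

open scoped RealInnerProductSpace

section Aux

/-- The gradient vector of an affine functional on Euclidean space. -/
noncomputable def rvec {n : ℕ} (f : EuclideanSpace ℝ (Fin n) →ᵃ[ℝ] ℝ) :
    EuclideanSpace ℝ (Fin n) :=
  (InnerProductSpace.toDual ℝ (EuclideanSpace ℝ (Fin n))).symm
    (LinearMap.toContinuousLinearMap f.linear)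

lemma rvec_inner {n : ℕ} (f : EuclideanSpace ℝ (Fin n) →ᵃ[ℝ] ℝ) (x : EuclideanSpace ℝ (Fin n)) :
    ⟪rvec f, x⟫ = f.linear x := by simp [rvec]

lemma rvec_ne_zero {n : ℕ} (f : EuclideanSpace ℝ (Fin n) →ᵃ[ℝ] ℝ)
    (h : ¬ ∃ c, ∀ x, f x = c) : rvec f ≠ 0 := by
  intro h0
  apply h
  refine ⟨f 0, fun x => ?_⟩
  have h1 : f.linear x = 0 := by
    have : ⟪rvec f, x⟫ = f.linear x := rvec_inner f x
    rw [h0] at this; simpa using this.symm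
  have := f.map_vadd 0 x
  simp [vadd_eq_add, h1] at this
  simpa using this

lemma affine_decomp {n : ℕ} (f : EuclideanSpace ℝ (Fin n) →ᵃ[ℝ] ℝ)
    (x : EuclideanSpace ℝ (Fin n)) : f x = f.linear x + f 0 := by
  have := f.map_vadd 0 x
  simpa [vadd_eq_add] using this

/-- A coset of a rank `< n` subgroup of `ℤⁿ` is annihilated (up to a constant) by a nonzero
vector. -/
lemma coset_functional {n : ℕ} (H : AddSubgroup (Fin n → ℤ))
    (hrk : Module.finrank ℤ H < n) :
    ∃ u : EuclideanSpace ℝ (Fin n), u ≠ 0 ∧ ∀ h ∈ H, ⟪u, latticeMap h⟫ = 0 := by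
  classical
  set M : Submodule ℤ (Fin n → ℤ) := AddSubgroup.toIntSubmodule H with hM
  let b := Module.Free.chooseBasis ℤ M
  set V : Submodule ℝ (EuclideanSpace ℝ (Fin n)) :=
    Submodule.span ℝ (Set.range (fun j => latticeMap ((b j : Fin n → ℤ)))) with hV
  have hsub : ∀ h ∈ H, latticeMap h ∈ V := by
    intro h hh
    have hx : (⟨h, hh⟩ : M) = ∑ j, (b.repr ⟨h, hh⟩) j • b j := (b.sum_repr _).symm
    have hx2 : h = ∑ j, (b.repr ⟨h, hh⟩) j • ((b j : Fin n → ℤ)) := by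
      have := congrArg (Subtype.val) hx
      simpa only [Submodule.coe_sum, Submodule.coe_smul] using this
    have : latticeMap h
        = ∑ j, ((b.repr ⟨h, hh⟩) j : ℝ) • latticeMap ((b j : Fin n → ℤ)) := by
      conv_lhs => rw [hx2]
      ext i
      have hr : (∑ j, ((b.repr ⟨h, hh⟩) j : ℝ) • latticeMap ((b j : Fin n → ℤ))) i
          = ∑ j, ((b.repr ⟨h, hh⟩) j : ℝ) * ((b j : Fin n → ℤ) i : ℝ) := by
        rw [WithLp.ofLp_sum, Finset.sum_apply]
        simp [latticeMap]
      rw [hr]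
      simp only [latticeMap, PiLp.toLp_apply, Finset.sum_apply, Pi.smul_apply, smul_eq_mul]
      push_cast
      rfl
    rw [this]
    exact Submodule.sum_mem _ fun j _ =>
      Submodule.smul_mem _ _ (Submodule.subset_span (Set.mem_range_self j))
  have hVlt : V ≠ ⊤ := by
    intro htop
    have h1 : Module.finrank ℝ V ≤ Fintype.card (Module.Free.ChooseBasisIndex ℤ M) :=
      finrank_range_le_card _
    have h2 : Fintype.card (Module.Free.ChooseBasisIndex ℤ M) = Module.finrank ℤ M :=
      (Module.finrank_eq_card_chooseBasisIndex ℤ M).symm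
    have h3 : Module.finrank ℝ V = n := by
      rw [htop, finrank_top, finrank_euclideanSpace_fin]
    have h4 : Module.finrank ℤ M = Module.finrank ℤ H := rfl
    omega
  have : Vᗮ ≠ ⊥ := fun hbot => hVlt (Submodule.orthogonal_eq_bot_iff.mp hbot)
  obtain ⟨u, hu, hune⟩ := Submodule.exists_mem_ne_zero_of_ne_bot this
  refine ⟨u, hune, fun h hh => ?_⟩
  have := (Submodule.mem_orthogonal V u).mp hu _ (hsub h hh)
  rw [real_inner_comm] at this
  exact this

/-- A polyhedron of finite inradius is covered by finitely many slabs. -/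
lemma poly_slabs {n : ℕ} (Q : Set (EuclideanSpace ℝ (Fin n))) (hQ : IsPolyhedron Q)
    (hfin : inradius Q ≠ ⊤) :
    ∃ (N : ℕ) (u : Fin N → EuclideanSpace ℝ (Fin n)) (lo hi : Fin N → ℝ),
      (∀ t, u t ≠ 0) ∧ ∀ x ∈ Q, ∃ t, ⟪u t, x⟫ ∈ Set.Icc (lo t) (hi t) := by
  obtain ⟨M, Hs, hhalf, rfl⟩ := hQ
  choose f hfc hcase using hhalf
  set ρ : ℝ := (inradius (⋂ i, Hs i)).toReal + 1 with hρ
  have hρ0 : 0 ≤ ρ := by positivity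
  have key : ∀ j, ∃ lo hi : ℝ, ∀ x ∈ Hs j, ⟪rvec (f j), x⟫ ∉ Set.Icc lo hi →
      ∀ y : EuclideanSpace ℝ (Fin n), ‖y - x‖ ≤ ρ → y ∈ Hs j := by
    intro j
    have hv : ‖rvec (f j)‖ ≠ 0 := norm_ne_zero_iff.mpr (rvec_ne_zero _ (hfc j))
    have hdec : ∀ x y : EuclideanSpace ℝ (Fin n), ‖y - x‖ ≤ ρ →
        |f j y - f j x| ≤ ρ * ‖rvec (f j)‖ := by
      intro x y hxy
      have h1 : f j y - f j x = ⟪rvec (f j), y - x⟫ := by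
        rw [rvec_inner, map_sub, affine_decomp (f j) x, affine_decomp (f j) y]; ring
      rw [h1]
      calc |⟪rvec (f j), y - x⟫| ≤ ‖rvec (f j)‖ * ‖y - x‖ := abs_real_inner_le_norm _ _
        _ ≤ ‖rvec (f j)‖ * ρ := by
            apply mul_le_mul_of_nonneg_left hxy (norm_nonneg _)
        _ = ρ * ‖rvec (f j)‖ := mul_comm _ _
    have hinnx : ∀ x, ⟪rvec (f j), x⟫ = f j x - f j 0 := by
      intro x; rw [rvec_inner, affine_decomp (f j) x]; ring
    rcases hcase j with hc | hc | hc | hc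
    · -- S = {0 < f}
      refine ⟨-(f j 0), -(f j 0) + ρ * ‖rvec (f j)‖, fun x hx hni y hy => ?_⟩
      rw [hc] at hx ⊢
      have hlb : -(f j 0) ≤ ⟪rvec (f j), x⟫ := by rw [hinnx]; simp at hx ⊢; linarith
      have hub : -(f j 0) + ρ * ‖rvec (f j)‖ < ⟪rvec (f j), x⟫ := by
        by_contra hle; exact hni ⟨hlb, by linarith⟩
      have := hdec x y hy
      have hfx : ρ * ‖rvec (f j)‖ - f j 0 + f j 0 < f j x := by
        rw [hinnx] at hub; linarith
      simp only [Set.mem_setOf_eq]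
      have := abs_le.mp this
      linarith
    · -- S = {f < 0}
      refine ⟨-(f j 0) - ρ * ‖rvec (f j)‖, -(f j 0), fun x hx hni y hy => ?_⟩
      rw [hc] at hx ⊢
      have hub : ⟪rvec (f j), x⟫ ≤ -(f j 0) := by rw [hinnx]; simp at hx ⊢; linarith
      have hlb : ⟪rvec (f j), x⟫ < -(f j 0) - ρ * ‖rvec (f j)‖ := by
        by_contra hle; exact hni ⟨by linarith, hub⟩
      have := hdec x y hy
      rw [hinnx] at hlb
      simp only [Set.mem_setOf_eq]
      have := abs_le.mp this
      linarith
    · -- S = {0 ≤ f}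
      refine ⟨-(f j 0), -(f j 0) + ρ * ‖rvec (f j)‖, fun x hx hni y hy => ?_⟩
      rw [hc] at hx ⊢
      have hlb : -(f j 0) ≤ ⟪rvec (f j), x⟫ := by rw [hinnx]; simp at hx ⊢; linarith
      have hub : -(f j 0) + ρ * ‖rvec (f j)‖ < ⟪rvec (f j), x⟫ := by
        by_contra hle; exact hni ⟨hlb, by linarith⟩
      have := hdec x y hy
      rw [hinnx] at hub
      simp only [Set.mem_setOf_eq]
      have := abs_le.mp this
      linarith
    · -- S = {f ≤ 0}
      refine ⟨-(f j 0) - ρ * ‖rvec (f j)‖, -(f j 0), fun x hx hni y hy => ?_⟩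
      rw [hc] at hx ⊢
      have hub : ⟪rvec (f j), x⟫ ≤ -(f j 0) := by rw [hinnx]; simp at hx ⊢; linarith
      have hlb : ⟪rvec (f j), x⟫ < -(f j 0) - ρ * ‖rvec (f j)‖ := by
        by_contra hle; exact hni ⟨by linarith, hub⟩
      have := hdec x y hy
      rw [hinnx] at hlb
      simp only [Set.mem_setOf_eq]
      have := abs_le.mp this
      linarith
  choose lo hi hkey using key
  refine ⟨M, fun j => rvec (f j), lo, hi, fun j => rvec_ne_zero _ (hfc j), ?_⟩
  intro x hx
  by_contra hno
  push_neg at hno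
  have hball : Metric.closedBall x ρ ⊆ ⋂ i, Hs i := by
    intro y hy
    rw [Set.mem_iInter]
    intro j
    exact hkey j x (Set.mem_iInter.mp hx j) (hno j) y
      (by rwa [Metric.mem_closedBall, dist_eq_norm] at hy)
  have hle : (ENNReal.ofReal ρ) ≤ inradius (⋂ i, Hs i) := by
    have : ((ρ.toNNReal : NNReal) : ℝ≥0∞) ≤ inradius (⋂ i, Hs i) := by
      refine le_iSup_of_le x (le_iSup_of_le ρ.toNNReal (le_iSup_of_le ?_ le_rfl))
      rwa [Real.coe_toNNReal _ hρ0]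
    rwa [ENNReal.ofReal]
  have hlt : inradius (⋂ i, Hs i) < ENNReal.ofReal ρ := by
    conv_lhs => rw [← ENNReal.ofReal_toReal hfin]
    rw [ENNReal.ofReal_lt_ofReal_iff (by positivity)]
    linarith
  exact absurd hle (not_le.mpr hlt)

/-- There is an integer direction not orthogonal to any of finitely many nonzero vectors. -/
lemma exists_direction {n : ℕ} {ι : Type*} [Fintype ι]
    (u : ι → EuclideanSpace ℝ (Fin n)) (hu : ∀ t, u t ≠ 0) :
    ∃ d : Fin n → ℤ, ∀ t, ⟪u t, latticeMap d⟫ ≠ 0 := by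
  classical
  set p : ι → Polynomial ℝ :=
    fun t => ∑ i : Fin n, Polynomial.C (u t i) * Polynomial.X ^ (i : ℕ) with hp
  have hcoeff : ∀ t (i : Fin n), (p t).coeff (i : ℕ) = u t i := by
    intro t i
    rw [hp]
    simp only [Polynomial.finset_sum_coeff, Polynomial.coeff_C_mul, Polynomial.coeff_X_pow]
    rw [Finset.sum_eq_single i]
    · simp
    · intro j _ hj
      have : (i : ℕ) ≠ (j : ℕ) := fun h => hj (Fin.ext h.symm)
      simp [this]
    · simp
  have hpne : ∀ t, p t ≠ 0 := by
    intro t hzero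
    apply hu t
    ext i
    have := hcoeff t i
    rw [hzero] at this
    simpa using this.symm
  have hbadfin : (⋃ t, {s : ℤ | (p t).eval (s : ℝ) = 0}).Finite := by
    apply Set.finite_iUnion
    intro t
    have hroots : {x : ℝ | Polynomial.IsRoot (p t) x}.Finite :=
      Polynomial.finite_setOf_isRoot (hpne t)
    have : {s : ℤ | (p t).eval (s : ℝ) = 0}
        = (fun s : ℤ => (s : ℝ)) ⁻¹' {x | Polynomial.IsRoot (p t) x} := rfl
    rw [this]
    exact Set.Finite.preimage (Set.injOn_of_injective Int.cast_injective) hroots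
  obtain ⟨s, hs⟩ := (Set.Finite.infinite_compl hbadfin).nonempty
  refine ⟨fun i => s ^ (i : ℕ), fun t => ?_⟩
  have heval : ⟪u t, latticeMap (fun i => s ^ (i : ℕ))⟫ = (p t).eval (s : ℝ) := by
    rw [hp]
    simp only [Polynomial.eval_finset_sum, Polynomial.eval_mul, Polynomial.eval_C,
      Polynomial.eval_pow, Polynomial.eval_X]
    rw [PiLp.inner_apply]
    apply Finset.sum_congr rfl
    intro i _
    simp only [latticeMap, PiLp.toLp_apply, RCLike.inner_apply, conj_trivial]
    push_cast
    ring
  rw [heval]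
  intro h0
  exact hs (Set.mem_iUnion.mpr ⟨t, h0⟩)

/-- A set of infinite inradius contains arbitrarily large closed balls. -/
lemma big_ball {n : ℕ} (P : Set (EuclideanSpace ℝ (Fin n))) (hPr : inradius P = ⊤) (R : ℝ) :
    ∃ (x : EuclideanSpace ℝ (Fin n)) (r : NNReal), Metric.closedBall x (r:ℝ) ⊆ P ∧ R ≤ (r:ℝ) := by
  have h : (ENNReal.ofReal R) < inradius P := hPr ▸ ENNReal.ofReal_lt_top
  rw [inradius, lt_iSup_iff] at h
  obtain ⟨x, h⟩ := h
  rw [lt_iSup_iff] at h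
  obtain ⟨r, h⟩ := h
  rw [lt_iSup_iff] at h
  obtain ⟨hb, h⟩ := h
  refine ⟨x, r, hb, ?_⟩
  have : ENNReal.ofReal R ≤ ENNReal.ofReal (r:ℝ) := by
    rw [ENNReal.ofReal_coe_nnreal]; exact h.le
  rcases le_or_gt R 0 with h0 | h0
  · exact h0.trans r.2
  · exact (ENNReal.ofReal_le_ofReal_iff r.2).mp this

/-- Key counting lemma: a set of infinite inradius contains a lattice point outside any finite
family of slabs. -/
lemma avoid_slabs {n : ℕ} {ι : Type*} [Fintype ι]
    (u : ι → EuclideanSpace ℝ (Fin n)) (hu : ∀ t, u t ≠ 0) (lo hi : ι → ℝ)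
    (P : Set (EuclideanSpace ℝ (Fin n))) (hPr : inradius P = ⊤) :
    ∃ z : Fin n → ℤ, latticeMap z ∈ P ∧
      ∀ t, ⟪u t, latticeMap z⟫ ∉ Set.Icc (lo t) (hi t) := by
  classical
  obtain ⟨d, hd⟩ := exists_direction u hu
  set δ : ι → ℝ := fun t => ⟪u t, latticeMap d⟫ with hδ
  set Mt : ι → ℕ := fun t => ⌊(hi t - lo t) / |δ t|⌋₊ + 1 with hMt
  set N : ℕ := ∑ t, Mt t with hN
  obtain ⟨x, r, hball, hrR⟩ := big_ball P hPr
    (Real.sqrt n + N * ‖latticeMap d‖)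
  set z₀ : Fin n → ℤ := fun i => ⌊x i⌋ with hz₀
  set zf : ℕ → (Fin n → ℤ) := fun s i => z₀ i + s * d i with hzf
  have hdecomp : ∀ s : ℕ, latticeMap (zf s) = latticeMap z₀ + (s : ℝ) • latticeMap d := by
    intro s
    ext i
    simp only [latticeMap, PiLp.toLp_apply, hzf, PiLp.add_apply, PiLp.smul_apply, smul_eq_mul]
    push_cast
    ring
  have hz₀x : ‖latticeMap z₀ - x‖ ≤ Real.sqrt n := by
    rw [EuclideanSpace.norm_eq]
    apply Real.sqrt_le_sqrt
    calc ∑ i, ‖(latticeMap z₀ - x) i‖ ^ 2 ≤ ∑ _i : Fin n, (1:ℝ) := by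
          apply Finset.sum_le_sum
          intro i _
          have h1 : ‖(latticeMap z₀ - x) i‖ ≤ 1 := by
            simp only [PiLp.sub_apply, latticeMap, PiLp.toLp_apply, hz₀, Real.norm_eq_abs]
            rw [abs_le]
            constructor
            · linarith [Int.floor_le (x i), Int.lt_floor_add_one (x i)]
            · linarith [Int.floor_le (x i), Int.lt_floor_add_one (x i)]
          calc ‖(latticeMap z₀ - x) i‖ ^ 2 ≤ 1 ^ 2 := by
                apply pow_le_pow_left₀ (norm_nonneg _) h1
            _ = 1 := one_pow 2
      _ = n := by simp
  have hmem : ∀ s : ℕ, s ≤ N → latticeMap (zf s) ∈ Metric.closedBall x (r : ℝ) := by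
    intro s hs
    rw [Metric.mem_closedBall, dist_eq_norm]
    have : latticeMap (zf s) - x = (latticeMap z₀ - x) + (s : ℝ) • latticeMap d := by
      rw [hdecomp]; abel
    rw [this]
    calc ‖(latticeMap z₀ - x) + (s : ℝ) • latticeMap d‖
        ≤ ‖latticeMap z₀ - x‖ + ‖(s : ℝ) • latticeMap d‖ := norm_add_le _ _
      _ ≤ Real.sqrt n + (N : ℝ) * ‖latticeMap d‖ := by
          apply add_le_add hz₀x
          rw [norm_smul, Real.norm_natCast]
          apply mul_le_mul_of_nonneg_right (by exact_mod_cast hs) (norm_nonneg _)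
      _ ≤ (r : ℝ) := hrR
  have hinner : ∀ (t : ι) (s : ℕ),
      ⟪u t, latticeMap (zf s)⟫ = ⟪u t, latticeMap z₀⟫ + (s : ℝ) * δ t := by
    intro t s
    rw [hdecomp, inner_add_right, real_inner_smul_right]
  set F : ι → Finset ℕ := fun t => (Finset.range (N+1)).filter
    (fun s => ⟪u t, latticeMap (zf s)⟫ ∈ Set.Icc (lo t) (hi t)) with hF
  have hcard : ∀ t, (F t).card ≤ Mt t := by
    intro t
    rcases Finset.eq_empty_or_nonempty (F t) with he | hne
    · rw [he]; simp [hMt]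
    · set s₀ := (F t).min' hne with hs₀
      have hs₀mem : s₀ ∈ F t := (F t).min'_mem hne
      have hsub : F t ⊆ Finset.Icc s₀ (s₀ + ⌊(hi t - lo t) / |δ t|⌋₊) := by
        intro s hsmem
        rw [Finset.mem_Icc]
        have h1 : s₀ ≤ s := (F t).min'_le s hsmem
        refine ⟨h1, ?_⟩
        have hδpos : 0 < |δ t| := abs_pos.mpr (hd t)
        have hIs : ⟪u t, latticeMap (zf s)⟫ ∈ Set.Icc (lo t) (hi t) :=
          (Finset.mem_filter.mp hsmem).2
        have hIs₀ : ⟪u t, latticeMap (zf s₀)⟫ ∈ Set.Icc (lo t) (hi t) :=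
          (Finset.mem_filter.mp hs₀mem).2
        rw [hinner] at hIs hIs₀
        obtain ⟨ha1, ha2⟩ := hIs
        obtain ⟨hb1, hb2⟩ := hIs₀
        have hdiff : ((s : ℝ) - (s₀ : ℝ)) * |δ t| ≤ hi t - lo t := by
          have habs : |((s : ℝ) - (s₀ : ℝ)) * δ t| ≤ hi t - lo t := by
            rw [abs_le]
            constructor <;> nlinarith
          have h0s : (0:ℝ) ≤ (s : ℝ) - (s₀ : ℝ) :=
            sub_nonneg.mpr (by exact_mod_cast h1)
          calc ((s : ℝ) - (s₀ : ℝ)) * |δ t| = |((s : ℝ) - (s₀ : ℝ))| * |δ t| := by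
                rw [abs_of_nonneg h0s]
            _ = |((s : ℝ) - (s₀ : ℝ)) * δ t| := (abs_mul _ _).symm
            _ ≤ hi t - lo t := habs
        have hle : ((s - s₀ : ℕ) : ℝ) ≤ (hi t - lo t) / |δ t| := by
          rw [le_div_iff₀ hδpos]
          push_cast [Nat.cast_sub h1]
          exact hdiff
        have := Nat.le_floor hle
        omega
      calc (F t).card ≤ (Finset.Icc s₀ (s₀ + ⌊(hi t - lo t) / |δ t|⌋₊)).card :=
            Finset.card_le_card hsub
        _ = ⌊(hi t - lo t) / |δ t|⌋₊ + 1 := by rw [Nat.card_Icc]; omega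
  have hex : ∃ s ∈ Finset.range (N+1), ∀ t, s ∉ F t := by
    by_contra hno
    push_neg at hno
    have hsub2 : Finset.range (N+1) ⊆ Finset.univ.biUnion F := by
      intro s hs
      obtain ⟨t, ht⟩ := hno s hs
      exact Finset.mem_biUnion.mpr ⟨t, Finset.mem_univ t, ht⟩
    have h1 : (Finset.range (N+1)).card ≤ (Finset.univ.biUnion F).card :=
      Finset.card_le_card hsub2
    have h2 : (Finset.univ.biUnion F).card ≤ ∑ t, (F t).card :=
      Finset.card_biUnion_le
    have h3 : ∑ t, (F t).card ≤ N := by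
      rw [hN]
      exact Finset.sum_le_sum fun t _ => hcard t
    rw [Finset.card_range] at h1
    omega
  obtain ⟨s, hsr, hst⟩ := hex
  refine ⟨zf s, hball (hmem s (by simpa using Nat.lt_succ_iff.mp (Finset.mem_range.mp hsr))), ?_⟩
  intro t hIcc
  exact hst t (Finset.mem_filter.mpr ⟨hsr, hIcc⟩)

end Aux

/-- if `X ⊆ ℤⁿ` is a finite union of cosets of rank `< n`, `P` is a polyhedron of
infinite inradius, and polyhedra `Q₁,...,Q_k` cover `P ∩ (ℤⁿ \ X)`, then some `Qᵢ` has infinite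
inradius. -/
theorem stmt14 {n m k : ℕ} (X : Set (Fin n → ℤ))
    (a : Fin m → (Fin n → ℤ)) (H : Fin m → AddSubgroup (Fin n → ℤ))
    (hrk : ∀ i, Module.finrank ℤ (H i) < n)
    (hX : X = ⋃ i, (a i + ·) '' ((H i : Set (Fin n → ℤ))))
    (P : Set (EuclideanSpace ℝ (Fin n))) (hP : IsPolyhedron P) (hPr : inradius P = ⊤)
    (Q : Fin k → Set (EuclideanSpace ℝ (Fin n))) (hQ : ∀ i, IsPolyhedron (Q i))
    (hcover : P ∩ (latticeMap '' Xᶜ) ⊆ ⋃ i, Q i) :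
    ∃ i, inradius (Q i) = ⊤ := by
  classical
  by_contra hcon
  push_neg at hcon
  choose N uQ loQ hiQ huQ hQcov using fun i => poly_slabs (Q i) (hQ i) (hcon i)
  choose uC huC hCzero using fun i => coset_functional (H i) (hrk i)
  set ι := (Σ i : Fin k, Fin (N i)) ⊕ Fin m with hι
  set U : ι → EuclideanSpace ℝ (Fin n) :=
    Sum.elim (fun p => uQ p.1 p.2) (fun i => uC i) with hU
  have hUne : ∀ t, U t ≠ 0 := by
    rintro (⟨i, j⟩ | i)
    · exact huQ i j
    · exact (huC i)
  set LO : ι → ℝ :=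
    Sum.elim (fun p => loQ p.1 p.2) (fun i => ⟪uC i, latticeMap (a i)⟫) with hLO
  set HI : ι → ℝ :=
    Sum.elim (fun p => hiQ p.1 p.2) (fun i => ⟪uC i, latticeMap (a i)⟫) with hHI
  obtain ⟨z, hzP, hznot⟩ := avoid_slabs U hUne LO HI P hPr
  by_cases hzX : z ∈ X
  · rw [hX] at hzX
    obtain ⟨S, ⟨i, rfl⟩, hzS⟩ := hzX
    obtain ⟨h, hh, hzeq⟩ := hzS
    have hlm : latticeMap z = latticeMap (a i) + latticeMap h := by
      rw [← hzeq]
      ext j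
      simp only [latticeMap, PiLp.toLp_apply, PiLp.add_apply, Pi.add_apply]
      push_cast
      rfl
    have : ⟪uC i, latticeMap z⟫ = ⟪uC i, latticeMap (a i)⟫ := by
      rw [hlm, inner_add_right, hCzero i h hh, add_zero]
    exact hznot (Sum.inr i) (by
      simp only [hU, hLO, hHI, Sum.elim_inr]
      rw [this]
      exact ⟨le_rfl, le_rfl⟩)
  · have hmem : latticeMap z ∈ P ∩ (latticeMap '' Xᶜ) :=
      ⟨hzP, Set.mem_image_of_mem _ hzX⟩
    obtain ⟨S, ⟨i, rfl⟩, hzQ⟩ := hcover hmem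
    obtain ⟨j, hj⟩ := hQcov i (latticeMap z) hzQ
    exact hznot (Sum.inl ⟨i, j⟩) (by simpa only [hU, hLO, hHI, Sum.elim_inl] using hj)
end
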